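/- arXiv:2506.12924 — 3 statements merged into one kernel-verified Lean document; each statement's English description precedes it below -/
import Mathlib

section
/- For fixed q, b, t there exists a (t,b)-burst-correcting code C ⊆ Σ_q^n with redundancy n − log_q|C| ≤ 2t·log_q n − log_q log n + O(1), i.e., |C| ≥ c · q^n · (log n) / n^{2t} for some constant c > 0 and all large n. -/
set_option linter.unusedSectionVars false
set_option linter.unusedVariables false
set_option maxHeartbeats 1000000
open Finset


open scoped BigOperators

/-- The cyclic interval of length `L` starting at position `i` in `ZMod n`. -/
def cycInt (n : ℕ) (i : ZMod n) (L : ℕ) : Set (ZMod n) :=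
  {j | ∃ k : ℕ, k < L ∧ j = i + (k : ZMod n)}

/-- `e` is a burst supported in the cyclic interval starting at `i` of length `L ≤ b`. -/
def BurstAt {G : Type*} [AddCommGroup G] {n : ℕ} (b : ℕ) (e : ZMod n → G)
    (i : ZMod n) (L : ℕ) : Prop :=
  L ≤ b ∧ ∀ j : ZMod n, e j ≠ 0 → j ∈ cycInt n i L

/-- `e` is a `b≤`-burst: its support lies in a cyclic interval of length at most `b`. -/
def IsBurst {G : Type*} [AddCommGroup G] {n : ℕ} (b : ℕ) (e : ZMod n → G) : Prop :=
  ∃ i L, BurstAt b e i L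

/-- `w` is a sum of exactly `t` many `b≤`-bursts. -/
def SumOfBursts {G : Type*} [AddCommGroup G] {n : ℕ} (b t : ℕ) (w : ZMod n → G) : Prop :=
  ∃ l : List (ZMod n → G), l.length = t ∧ (∀ e ∈ l, IsBurst b e) ∧ l.sum = w

/-- The cyclic burst distance: minimum number of `b≤`-bursts summing to `x - y`. -/
noncomputable def burstDist {G : Type*} [AddCommGroup G] {n : ℕ} (b : ℕ)
    (x y : ZMod n → G) : ℕ :=
  sInf {t | SumOfBursts b t (x - y)}

/-- `w` is a sum of exactly `t` pairwise disjoint `b≤`-bursts (disjoint covering intervals). -/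
def SumOfDisjointBursts {G : Type*} [AddCommGroup G] {n : ℕ} (b t : ℕ)
    (w : ZMod n → G) : Prop :=
  ∃ (es : Fin t → ZMod n → G) (ps : Fin t → ZMod n) (Ls : Fin t → ℕ),
    (∀ m, BurstAt b (es m) (ps m) (Ls m)) ∧
    (∀ m m' : Fin t, m ≠ m' → cycInt n (ps m) (Ls m) ∩ cycInt n (ps m') (Ls m') = ∅) ∧
    ∑ m, es m = w

/-- `B_{≤t,≤b}`: vectors expressible as a sum of at most `t` pairwise disjoint `b≤`-bursts. -/
def BSet (n b t : ℕ) (G : Type*) [AddCommGroup G] : Set (ZMod n → G) :=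
  {w | ∃ i ≤ t, SumOfDisjointBursts b i w}

/-- The radius-`t` burst ball around `x`. -/
def burstBall {G : Type*} [AddCommGroup G] {n : ℕ} (b t : ℕ) (x : ZMod n → G) :
    Set (ZMod n → G) :=
  {y | burstDist b x y ≤ t}

/-- A `(t,b)`-burst-correcting code: radius-`t` burst balls around distinct codewords
are disjoint. -/
def IsBurstCorrecting {G : Type*} [AddCommGroup G] {n : ℕ} (t b : ℕ)
    (C : Set (ZMod n → G)) : Prop :=
  ∀ u ∈ C, ∀ v ∈ C, u ≠ v → burstBall b t u ∩ burstBall b t v = ∅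



namespace GVAux

variable {V : Type*} [Fintype V] [DecidableEq V]
variable (Adj : V → V → Prop) [DecidableRel Adj]

def nbr (v : V) : Finset V := Finset.univ.filter (fun u => Adj v u)
def indep (s : Finset V) : Prop := ∀ x ∈ s, ∀ y ∈ s, ¬ Adj x y
instance : DecidablePred (indep Adj) := fun s => by unfold indep; infer_instance
def II : Finset (Finset V) := Finset.univ.filter (indep Adj)

lemma mem_II {s : Finset V} : s ∈ II Adj ↔ indep Adj s := by simp [II]
lemma empty_mem_II : (∅ : Finset V) ∈ II Adj := by simp [II, indep]
lemma mem_nbr {v u : V} : u ∈ nbr Adj v ↔ Adj v u := by simp [nbr]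
lemma II_subset_mem {s t : Finset V} (hs : s ∈ II Adj) (h : t ⊆ s) : t ∈ II Adj := by
  rw [mem_II] at *; exact fun x hx y hy => hs x (h hx) y (h hy)

lemma sum_powerset_pow (lam : ℝ) (S : Finset V) :
    ∑ K ∈ S.powerset, lam ^ K.card = (1 + lam) ^ S.card := by
  have h := Finset.prod_add (fun _ : V => lam) (fun _ : V => (1:ℝ)) S
  simp only [Finset.prod_const, one_pow, mul_one] at h
  rw [add_comm 1 lam, h]

variable (lam : ℝ)

noncomputable def Pin (v : V) : ℝ := ∑ s ∈ (II Adj).filter (fun s => v ∈ s), lam ^ s.card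
noncomputable def Punc (v : V) : ℝ :=
  ∑ s ∈ (II Adj).filter (fun s => nbr Adj v ∩ s = ∅), lam ^ s.card
noncomputable def Tot : ℝ := ∑ s ∈ II Adj, lam ^ s.card

def xv (v : V) (J : Finset V) : ℕ :=
  ((nbr Adj v).filter (fun u => nbr Adj u ∩ J = ∅)).card

variable {Adj}

lemma key1 (hsym : ∀ x y, Adj x y → Adj y x) (hirr : ∀ x, ¬ Adj x x) (v : V) :
    (1 + lam) * Pin Adj lam v = lam * Punc Adj lam v := by
  classical
  have hsplit : Punc Adj lam v = Pin Adj lam v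
      + ∑ s ∈ (II Adj).filter (fun s => nbr Adj v ∩ s = ∅ ∧ v ∉ s), lam ^ s.card := by
    rw [Punc, Pin, Finset.sum_filter, Finset.sum_filter, Finset.sum_filter,
      ← Finset.sum_add_distrib]
    apply Finset.sum_congr rfl
    intro s hs
    rw [mem_II] at hs
    by_cases hv : v ∈ s
    · have hunc : nbr Adj v ∩ s = ∅ := by
        rw [Finset.eq_empty_iff_forall_notMem]
        intro u hu
        rw [Finset.mem_inter, mem_nbr] at hu
        exact hs v hv u hu.2 hu.1
      simp [hv, hunc]
    · simp [hv]
  have hbij : Pin Adj lam v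
      = ∑ s ∈ (II Adj).filter (fun s => nbr Adj v ∩ s = ∅ ∧ v ∉ s), lam * lam ^ s.card := by
    apply Finset.sum_nbij' (i := fun s => s.erase v) (j := fun s => insert v s)
    · intro s hs
      rw [Finset.mem_filter] at hs ⊢
      obtain ⟨hsI, hvs⟩ := hs
      refine ⟨II_subset_mem Adj hsI (Finset.erase_subset _ _), ?_, Finset.notMem_erase _ _⟩
      rw [Finset.eq_empty_iff_forall_notMem]
      intro u hu
      rw [Finset.mem_inter, mem_nbr, Finset.mem_erase] at hu
      rw [mem_II] at hsI
      exact hsI v hvs u hu.2.2 hu.1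
    · intro s hs
      rw [Finset.mem_filter] at hs ⊢
      obtain ⟨hsI, hunc, hvs⟩ := hs
      refine ⟨?_, Finset.mem_insert_self _ _⟩
      rw [mem_II] at hsI ⊢
      intro x hx y hy
      rw [Finset.mem_insert] at hx hy
      rcases hx with rfl | hx <;> rcases hy with rfl | hy
      · exact hirr _
      · intro h
        have : y ∈ nbr Adj x ∩ s := by rw [Finset.mem_inter, mem_nbr]; exact ⟨h, hy⟩
        rw [hunc] at this; exact absurd this (Finset.notMem_empty _)
      · intro h
        have : x ∈ nbr Adj y ∩ s := by
          rw [Finset.mem_inter, mem_nbr]; exact ⟨hsym _ _ h, hx⟩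
        rw [hunc] at this; exact absurd this (Finset.notMem_empty _)
      · exact hsI x hx y hy
    · intro s hs
      rw [Finset.mem_filter] at hs
      exact Finset.insert_erase hs.2
    · intro s hs
      rw [Finset.mem_filter] at hs
      exact Finset.erase_insert hs.2.2
    · intro s hs
      rw [Finset.mem_filter] at hs
      rw [← pow_succ']
      congr 1
      rw [Finset.card_erase_of_mem hs.2]
      have : s.card ≠ 0 := by
        intro h
        rw [Finset.card_eq_zero] at h
        subst h
        exact absurd hs.2 (Finset.notMem_empty _)
      omega
  rw [hsplit, hbij, ← Finset.mul_sum]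
  ring


lemma key3 (hirr : ∀ x, ¬ Adj x x) (hlam : 0 < lam) (v : V) :
    ∑ s ∈ II Adj, lam ^ s.card * ((1 + lam) ^ (1 + xv Adj v (s \ insert v (nbr Adj v))))⁻¹
      ≤ Punc Adj lam v := by
  classical
  have h1lam : (0:ℝ) < 1 + lam := by linarith
  set NN := insert v (nbr Adj v) with hNN
  have hmaps : ∀ s ∈ II Adj, s \ NN ∈ (II Adj).image (fun s => s \ NN) :=
    fun s hs => Finset.mem_image_of_mem _ hs
  rw [Punc, Finset.sum_filter,
    ← Finset.sum_fiberwise_of_maps_to hmaps (fun s => if nbr Adj v ∩ s = ∅ then lam ^ s.card else 0),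
    ← Finset.sum_fiberwise_of_maps_to hmaps
      (fun s => lam ^ s.card * ((1 + lam) ^ (1 + xv Adj v (s \ NN)))⁻¹)]
  apply Finset.sum_le_sum
  intro J hJ
  obtain ⟨s₀, hs₀, hgs₀⟩ := Finset.mem_image.mp hJ
  have hJI : J ∈ II Adj := II_subset_mem Adj hs₀ (by rw [← hgs₀]; exact Finset.sdiff_subset)
  have hJNN : ∀ x ∈ J, x ∉ NN := by
    rw [← hgs₀]; intro x hx; exact (Finset.mem_sdiff.mp hx).2
  set XJ := (nbr Adj v).filter (fun u => nbr Adj u ∩ J = ∅) with hXJ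
  set c : ℝ := ((1 + lam) ^ (1 + xv Adj v J))⁻¹ with hc
  have hcpos : 0 < c := by positivity
  have hconst : ∑ s ∈ (II Adj).filter (fun s => s \ NN = J),
      lam ^ s.card * ((1 + lam) ^ (1 + xv Adj v (s \ NN)))⁻¹
      = (∑ s ∈ (II Adj).filter (fun s => s \ NN = J), lam ^ s.card) * c := by
    rw [Finset.sum_mul]
    apply Finset.sum_congr rfl
    intro s hs
    rw [(Finset.mem_filter.mp hs).2]
  rw [hconst]
  have hfibsum : ∑ s ∈ (II Adj).filter (fun s => s \ NN = J), lam ^ s.card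
      ≤ lam ^ J.card * (1 + lam) ^ (1 + xv Adj v J) := by
    have hsplit : ∀ s ∈ (II Adj).filter (fun s => s \ NN = J),
        lam ^ s.card = lam ^ J.card * lam ^ (s ∩ NN).card := by
      intro s hs
      rw [← pow_add]
      congr 1
      have h := Finset.card_inter_add_card_sdiff s NN
      rw [(Finset.mem_filter.mp hs).2] at h
      omega
    rw [Finset.sum_congr rfl hsplit, ← Finset.mul_sum]
    apply mul_le_mul_of_nonneg_left _ (by positivity)
    have hinj : ∀ x ∈ (II Adj).filter (fun s => s \ NN = J),
        ∀ y ∈ (II Adj).filter (fun s => s \ NN = J), x ∩ NN = y ∩ NN → x = y := by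
      intro x hx y hy hxy
      have hx2 := (Finset.mem_filter.mp hx).2
      have hy2 := (Finset.mem_filter.mp hy).2
      rw [← Finset.sdiff_union_inter x NN, ← Finset.sdiff_union_inter y NN, hx2, hy2, hxy]
    have himg := Finset.sum_image (f := fun K : Finset V => lam ^ K.card)
      (g := fun s => s ∩ NN) (s := (II Adj).filter (fun s => s \ NN = J)) hinj
    rw [← himg]
    have hsub : ((II Adj).filter (fun s => s \ NN = J)).image (fun s => s ∩ NN)
        ⊆ (insert v XJ).powerset := by
      intro K hK
      obtain ⟨s, hs, rfl⟩ := Finset.mem_image.mp hK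
      rw [Finset.mem_powerset]
      have hsI := (Finset.mem_filter.mp hs).1
      have hsJ := (Finset.mem_filter.mp hs).2
      intro u hu
      obtain ⟨hus, huNN⟩ := Finset.mem_inter.mp hu
      rw [hNN, Finset.mem_insert] at huNN
      rcases huNN with rfl | hunb
      · exact Finset.mem_insert_self _ _
      · apply Finset.mem_insert_of_mem
        rw [hXJ, Finset.mem_filter]
        refine ⟨hunb, ?_⟩
        rw [Finset.eq_empty_iff_forall_notMem]
        intro w hw
        obtain ⟨hwnb, hwJ⟩ := Finset.mem_inter.mp hw
        have hwin : w ∈ s := by rw [← hsJ] at hwJ; exact (Finset.mem_sdiff.mp hwJ).1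
        rw [mem_II] at hsI
        exact hsI u hus w hwin ((mem_nbr _).mp hwnb)
    calc ∑ K ∈ ((II Adj).filter (fun s => s \ NN = J)).image (fun s => s ∩ NN), lam ^ K.card
        ≤ ∑ K ∈ (insert v XJ).powerset, lam ^ K.card :=
          Finset.sum_le_sum_of_subset_of_nonneg hsub (fun _ _ _ => by positivity)
      _ = (1 + lam) ^ (insert v XJ).card := sum_powerset_pow lam _
      _ = (1 + lam) ^ (1 + xv Adj v J) := by
          congr 1
          have hv : v ∉ XJ := by
            rw [hXJ, Finset.mem_filter, mem_nbr]
            intro h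
            exact hirr v h.1
          rw [Finset.card_insert_of_notMem hv]
          have hxx : XJ.card = xv Adj v J := rfl
          omega
  have hJfib : J ∈ (II Adj).filter (fun s => s \ NN = J) := by
    rw [Finset.mem_filter]
    refine ⟨hJI, ?_⟩
    rw [Finset.sdiff_eq_self_iff_disjoint, Finset.disjoint_left]
    exact hJNN
  have hJunc : nbr Adj v ∩ J = ∅ := by
    rw [Finset.eq_empty_iff_forall_notMem]
    intro u hu
    obtain ⟨h1, h2⟩ := Finset.mem_inter.mp hu
    exact hJNN u h2 (by rw [hNN]; exact Finset.mem_insert_of_mem h1)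
  calc (∑ s ∈ (II Adj).filter (fun s => s \ NN = J), lam ^ s.card) * c
      ≤ (lam ^ J.card * (1 + lam) ^ (1 + xv Adj v J)) * c :=
        mul_le_mul_of_nonneg_right hfibsum (le_of_lt hcpos)
    _ = lam ^ J.card := by
        rw [hc, mul_assoc, mul_inv_cancel₀ (by positivity), mul_one]
    _ = (if nbr Adj v ∩ J = ∅ then lam ^ J.card else 0) := by rw [if_pos hJunc]
    _ ≤ ∑ s ∈ (II Adj).filter (fun s => s \ NN = J),
          (if nbr Adj v ∩ s = ∅ then lam ^ s.card else 0) := by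
        apply Finset.single_le_sum _ hJfib
        intro s _
        split <;> positivity

lemma key2 : ∑ v, Pin Adj lam v = ∑ s ∈ II Adj, (s.card : ℝ) * lam ^ s.card := by
  classical
  have : ∀ v, Pin Adj lam v = ∑ s ∈ II Adj, (if v ∈ s then lam ^ s.card else 0) := by
    intro v; rw [Pin, Finset.sum_filter]
  rw [Finset.sum_congr rfl (fun v _ => this v), Finset.sum_comm]
  apply Finset.sum_congr rfl
  intro s _
  rw [Finset.sum_ite_mem, Finset.univ_inter, Finset.sum_const, nsmul_eq_mul]

lemma deletion (hlam : 0 < lam) (A0 S : Finset V) :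
    ∑ s ∈ (II Adj).filter (fun s => (A0 \ S) ∩ s = ∅), lam ^ s.card
      ≤ (1 + lam) ^ S.card * ∑ s ∈ (II Adj).filter (fun s => A0 ∩ s = ∅), lam ^ s.card := by
  classical
  have h1lam : (0:ℝ) < 1 + lam := by linarith
  set F := (II Adj).filter (fun s => (A0 \ S) ∩ s = ∅) with hF
  set F₂ := (II Adj).filter (fun s => A0 ∩ s = ∅) with hF₂
  have hinj : ∀ x ∈ F, ∀ y ∈ F,
      (fun s => (s \ S, s ∩ S)) x = (fun s => (s \ S, s ∩ S)) y → x = y := by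
    intro x hx y hy h
    simp only [Prod.mk.injEq] at h
    rw [← Finset.sdiff_union_inter x S, ← Finset.sdiff_union_inter y S, h.1, h.2]
  have himg := Finset.sum_image (f := fun p : Finset V × Finset V => lam ^ p.1.card * lam ^ p.2.card)
    (g := fun s => (s \ S, s ∩ S)) (s := F) hinj
  have hsum : ∑ s ∈ F, lam ^ s.card
      = ∑ p ∈ F.image (fun s => (s \ S, s ∩ S)), lam ^ p.1.card * lam ^ p.2.card := by
    rw [himg]
    apply Finset.sum_congr rfl
    intro s _
    show lam ^ s.card = lam ^ (s \ S).card * lam ^ (s ∩ S).card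
    rw [← pow_add]
    congr 1
    have h := Finset.card_inter_add_card_sdiff s S
    omega
  have hsub : F.image (fun s => (s \ S, s ∩ S)) ⊆ F₂ ×ˢ S.powerset := by
    intro p hp
    obtain ⟨s, hs, rfl⟩ := Finset.mem_image.mp hp
    rw [Finset.mem_product]
    have hsmem := (Finset.mem_filter.mp hs).1
    have hse := (Finset.mem_filter.mp hs).2
    constructor
    · rw [hF₂, Finset.mem_filter]
      refine ⟨II_subset_mem Adj hsmem Finset.sdiff_subset, ?_⟩
      rw [Finset.eq_empty_iff_forall_notMem]
      intro x hx
      rw [Finset.mem_inter, Finset.mem_sdiff] at hx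
      have hxin : x ∈ (A0 \ S) ∩ s := by
        rw [Finset.mem_inter, Finset.mem_sdiff]
        exact ⟨⟨hx.1, hx.2.2⟩, hx.2.1⟩
      rw [hse] at hxin
      exact absurd hxin (Finset.notMem_empty _)
    · rw [Finset.mem_powerset]
      exact Finset.inter_subset_right
  calc ∑ s ∈ F, lam ^ s.card
      = ∑ p ∈ F.image (fun s => (s \ S, s ∩ S)), lam ^ p.1.card * lam ^ p.2.card := hsum
    _ ≤ ∑ p ∈ F₂ ×ˢ S.powerset, lam ^ p.1.card * lam ^ p.2.card :=
        Finset.sum_le_sum_of_subset_of_nonneg hsub (fun p _ _ => by positivity)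
    _ = (∑ s ∈ F₂, lam ^ s.card) * (∑ K ∈ S.powerset, lam ^ K.card) := by
        rw [Finset.sum_mul_sum]
        rw [Finset.sum_product]
    _ = (1 + lam) ^ S.card * ∑ s ∈ F₂, lam ^ s.card := by
        rw [sum_powerset_pow, mul_comm]

lemma punc_nonneg (hlam : 0 < lam) (v : V) : 0 ≤ Punc Adj lam v := by
  apply Finset.sum_nonneg
  intro s _
  positivity

lemma key4 (hsym : ∀ x y, Adj x y → Adj y x) (hlam : 0 < lam) (Δ d₂ : ℕ)
    (hΔ : ∀ v : V, (nbr Adj v).card ≤ Δ)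
    (hcod : ∀ v u : V, Adj v u → ((nbr Adj u) ∩ (nbr Adj v)).card ≤ d₂) :
    ∑ v, ∑ s ∈ II Adj, lam ^ s.card * (xv Adj v (s \ insert v (nbr Adj v)) : ℝ)
      ≤ (1 + lam) ^ (d₂ + 1) * Δ * ∑ v, Punc Adj lam v := by
  classical
  have h1lam : (0:ℝ) < 1 + lam := by linarith
  -- rewrite inner sum as sum over neighbours
  have hstep1 : ∀ v : V, ∑ s ∈ II Adj, lam ^ s.card * (xv Adj v (s \ insert v (nbr Adj v)) : ℝ)
      = ∑ u ∈ nbr Adj v, ∑ s ∈ (II Adj).filter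
          (fun s => (nbr Adj u \ insert v (nbr Adj v)) ∩ s = ∅), lam ^ s.card := by
    intro v
    have hx : ∀ s : Finset V, (xv Adj v (s \ insert v (nbr Adj v)) : ℝ)
        = ∑ u ∈ nbr Adj v,
            (if (nbr Adj u \ insert v (nbr Adj v)) ∩ s = ∅ then (1:ℝ) else 0) := by
      intro s
      rw [xv, Finset.card_filter, Nat.cast_sum]
      apply Finset.sum_congr rfl
      intro u _
      have hiff : nbr Adj u ∩ (s \ insert v (nbr Adj v)) = ∅
          ↔ (nbr Adj u \ insert v (nbr Adj v)) ∩ s = ∅ := by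
        rw [Finset.eq_empty_iff_forall_notMem, Finset.eq_empty_iff_forall_notMem]
        constructor
        · intro h x hx
          rw [Finset.mem_inter, Finset.mem_sdiff] at hx
          exact h x (by rw [Finset.mem_inter, Finset.mem_sdiff]; exact ⟨hx.1.1, hx.2, hx.1.2⟩)
        · intro h x hx
          rw [Finset.mem_inter, Finset.mem_sdiff] at hx
          exact h x (by rw [Finset.mem_inter, Finset.mem_sdiff]; exact ⟨⟨hx.1, hx.2.2⟩, hx.2.1⟩)
      rcases Classical.em (nbr Adj u ∩ (s \ insert v (nbr Adj v)) = ∅) with h | h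
      · rw [if_pos h, if_pos (hiff.mp h), Nat.cast_one]
      · rw [if_neg h, if_neg (fun hc => h (hiff.mpr hc)), Nat.cast_zero]
    calc ∑ s ∈ II Adj, lam ^ s.card * (xv Adj v (s \ insert v (nbr Adj v)) : ℝ)
        = ∑ s ∈ II Adj, ∑ u ∈ nbr Adj v,
            lam ^ s.card * (if (nbr Adj u \ insert v (nbr Adj v)) ∩ s = ∅ then (1:ℝ) else 0) := by
          apply Finset.sum_congr rfl
          intro s _
          rw [hx s, Finset.mul_sum]
      _ = ∑ u ∈ nbr Adj v, ∑ s ∈ II Adj,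
            lam ^ s.card * (if (nbr Adj u \ insert v (nbr Adj v)) ∩ s = ∅ then (1:ℝ) else 0) :=
          Finset.sum_comm
      _ = ∑ u ∈ nbr Adj v, ∑ s ∈ (II Adj).filter
            (fun s => (nbr Adj u \ insert v (nbr Adj v)) ∩ s = ∅), lam ^ s.card := by
          apply Finset.sum_congr rfl
          intro u _
          rw [Finset.sum_filter]
          apply Finset.sum_congr rfl
          intro s _
          split <;> simp
  -- bound each W(v,u) via deletion
  have hstep2 : ∀ v : V, ∀ u ∈ nbr Adj v,
      ∑ s ∈ (II Adj).filter
          (fun s => (nbr Adj u \ insert v (nbr Adj v)) ∩ s = ∅), lam ^ s.card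
        ≤ (1 + lam) ^ (d₂ + 1) * Punc Adj lam u := by
    intro v u hu
    have hset : nbr Adj u \ insert v (nbr Adj v)
        = nbr Adj u \ (nbr Adj u ∩ insert v (nbr Adj v)) := by
      rw [Finset.sdiff_inter_self_left]
    have hdel := deletion (Adj := Adj) lam hlam (nbr Adj u) (nbr Adj u ∩ insert v (nbr Adj v))
    rw [← hset] at hdel
    have hcard : (nbr Adj u ∩ insert v (nbr Adj v)).card ≤ d₂ + 1 := by
      have hsub2 : nbr Adj u ∩ insert v (nbr Adj v) ⊆ insert v (nbr Adj u ∩ nbr Adj v) := by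
        intro x hx
        rw [Finset.mem_inter, Finset.mem_insert] at hx
        rcases hx.2 with rfl | h2
        · exact Finset.mem_insert_self _ _
        · exact Finset.mem_insert_of_mem (Finset.mem_inter.mpr ⟨hx.1, h2⟩)
      calc (nbr Adj u ∩ insert v (nbr Adj v)).card
          ≤ (insert v (nbr Adj u ∩ nbr Adj v)).card := Finset.card_le_card hsub2
        _ ≤ (nbr Adj u ∩ nbr Adj v).card + 1 := Finset.card_insert_le _ _
        _ ≤ d₂ + 1 := by
            have := hcod v u ((mem_nbr _).mp hu)
            omega
    calc ∑ s ∈ (II Adj).filter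
            (fun s => (nbr Adj u \ insert v (nbr Adj v)) ∩ s = ∅), lam ^ s.card
        ≤ (1 + lam) ^ (nbr Adj u ∩ insert v (nbr Adj v)).card * Punc Adj lam u := hdel
      _ ≤ (1 + lam) ^ (d₂ + 1) * Punc Adj lam u := by
          apply mul_le_mul_of_nonneg_right _ (punc_nonneg (Adj := Adj) lam hlam u)
          exact pow_le_pow_right₀ (by linarith) hcard
  -- swap the double sum over v, u
  have hswap : ∑ v, ∑ u ∈ nbr Adj v, Punc Adj lam u
      = ∑ u, ((nbr Adj u).card : ℝ) * Punc Adj lam u := by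
    have h1 : ∀ v : V, ∑ u ∈ nbr Adj v, Punc Adj lam u
        = ∑ u, (if u ∈ nbr Adj v then Punc Adj lam u else 0) := by
      intro v
      rw [Finset.sum_ite_mem, Finset.univ_inter]
    rw [Finset.sum_congr rfl (fun v _ => h1 v), Finset.sum_comm]
    apply Finset.sum_congr rfl
    intro u _
    have h2 : ∀ v : V, (if u ∈ nbr Adj v then Punc Adj lam u else 0)
        = (if v ∈ nbr Adj u then Punc Adj lam u else 0) := by
      intro v
      have : u ∈ nbr Adj v ↔ v ∈ nbr Adj u := by
        rw [mem_nbr, mem_nbr]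
        exact ⟨fun h => hsym _ _ h, fun h => hsym _ _ h⟩
      split
      · rename_i h; rw [if_pos (this.mp h)]
      · rename_i h; rw [if_neg (fun hc => h (this.mpr hc))]
    rw [Finset.sum_congr rfl (fun v _ => h2 v), Finset.sum_ite_mem, Finset.univ_inter,
      Finset.sum_const, nsmul_eq_mul]
  calc ∑ v, ∑ s ∈ II Adj, lam ^ s.card * (xv Adj v (s \ insert v (nbr Adj v)) : ℝ)
      = ∑ v, ∑ u ∈ nbr Adj v, ∑ s ∈ (II Adj).filter
          (fun s => (nbr Adj u \ insert v (nbr Adj v)) ∩ s = ∅), lam ^ s.card :=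
        Finset.sum_congr rfl (fun v _ => hstep1 v)
    _ ≤ ∑ v, ∑ u ∈ nbr Adj v, (1 + lam) ^ (d₂ + 1) * Punc Adj lam u := by
        apply Finset.sum_le_sum
        intro v _
        exact Finset.sum_le_sum (fun u hu => hstep2 v u hu)
    _ = (1 + lam) ^ (d₂ + 1) * ∑ v, ∑ u ∈ nbr Adj v, Punc Adj lam u := by
        rw [Finset.mul_sum]
        apply Finset.sum_congr rfl
        intro v _
        rw [Finset.mul_sum]
    _ = (1 + lam) ^ (d₂ + 1) * ∑ u, ((nbr Adj u).card : ℝ) * Punc Adj lam u := by rw [hswap]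
    _ ≤ (1 + lam) ^ (d₂ + 1) * (Δ * ∑ u, Punc Adj lam u) := by
        apply mul_le_mul_of_nonneg_left _ (by positivity)
        rw [Finset.mul_sum]
        apply Finset.sum_le_sum
        intro u _
        apply mul_le_mul_of_nonneg_right _ (punc_nonneg (Adj := Adj) lam hlam u)
        exact_mod_cast hΔ u
    _ = (1 + lam) ^ (d₂ + 1) * Δ * ∑ v, Punc Adj lam v := by ring

lemma jensen_exp {ι : Type*} (fs : Finset ι) (w z : ι → ℝ)
    (hw : ∀ i ∈ fs, 0 ≤ w i) (hw1 : ∑ i ∈ fs, w i = 1) :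
    Real.exp (∑ i ∈ fs, w i * z i) ≤ ∑ i ∈ fs, w i * Real.exp (z i) := by
  set μ := ∑ i ∈ fs, w i * z i with hμ
  have h1 : ∀ i ∈ fs, w i * (Real.exp μ * (z i - μ + 1)) ≤ w i * Real.exp (z i) := by
    intro i hi
    apply mul_le_mul_of_nonneg_left _ (hw i hi)
    have h2 : z i - μ + 1 ≤ Real.exp (z i - μ) := by
      have := Real.add_one_le_exp (z i - μ)
      linarith
    calc Real.exp μ * (z i - μ + 1) ≤ Real.exp μ * Real.exp (z i - μ) :=
          mul_le_mul_of_nonneg_left h2 (Real.exp_pos μ).le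
      _ = Real.exp (z i) := by rw [← Real.exp_add]; ring_nf
  have h3 : ∑ i ∈ fs, w i * (Real.exp μ * (z i - μ + 1)) = Real.exp μ := by
    have hpt : ∀ i ∈ fs, w i * (Real.exp μ * (z i - μ + 1))
        = Real.exp μ * (w i * z i) - (Real.exp μ * μ) * w i + Real.exp μ * w i := by
      intro i _
      ring
    rw [Finset.sum_congr rfl hpt]
    rw [Finset.sum_add_distrib, Finset.sum_sub_distrib, ← Finset.mul_sum, ← Finset.mul_sum,
      ← Finset.mul_sum, hw1, ← hμ]
    ring
  calc Real.exp μ = ∑ i ∈ fs, w i * (Real.exp μ * (z i - μ + 1)) := h3.symm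
    _ ≤ ∑ i ∈ fs, w i * Real.exp (z i) := Finset.sum_le_sum h1

theorem exists_big_indep (Adj : V → V → Prop) [DecidableRel Adj]
    (hsym : ∀ x y, Adj x y → Adj y x) (hirr : ∀ x, ¬ Adj x x)
    (Δ d₂ : ℕ) (hΔ1 : 1 ≤ Δ)
    (hΔ : ∀ v : V, (nbr Adj v).card ≤ Δ)
    (hcod : ∀ v u : V, Adj v u → ((nbr Adj u) ∩ (nbr Adj v)).card ≤ d₂)
    (m : ℝ) (hm1 : 1 ≤ m) (hm : m ≤ (Δ : ℝ) / ((d₂ : ℝ) + 1)) :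
    ∃ s : Finset V, indep Adj s ∧
      (Fintype.card V : ℝ) * Real.log m / (4 * Real.exp 1 * Δ) ≤ s.card := by
  classical
  rcases Nat.eq_zero_or_pos (Fintype.card V) with hN0 | hNpos
  · refine ⟨∅, fun x hx => absurd hx (Finset.notMem_empty x), ?_⟩
    rw [hN0]
    simp
  set lam : ℝ := 1 / ((d₂ : ℝ) + 1) with hlamdef
  have hd2 : (0:ℝ) < (d₂:ℝ) + 1 := by positivity
  have hlam : 0 < lam := by positivity
  have hlam1 : lam ≤ 1 := by
    rw [hlamdef, div_le_one hd2]
    have : (0:ℝ) ≤ (d₂:ℝ) := Nat.cast_nonneg _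
    linarith
  have h1lam : (0:ℝ) < 1 + lam := by linarith
  set N := Fintype.card V with hNdef
  have hNR : (1:ℝ) ≤ (N:ℝ) := by exact_mod_cast hNpos
  set T := Tot Adj lam with hTdef
  have hT1 : (1:ℝ) ≤ T := by
    rw [hTdef, Tot]
    have h := Finset.single_le_sum (f := fun s : Finset V => lam ^ s.card)
      (fun s _ => by positivity) (empty_mem_II Adj)
    simpa using h
  have hT0 : (0:ℝ) < T := lt_of_lt_of_le one_pos hT1
  set U := ∑ v : V, Punc Adj lam v with hUdef
  have hPunc1 : ∀ v : V, (1:ℝ) ≤ Punc Adj lam v := by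
    intro v
    rw [Punc]
    have hemm : ∅ ∈ (II Adj).filter (fun s => nbr Adj v ∩ s = ∅) := by
      rw [Finset.mem_filter]
      exact ⟨empty_mem_II Adj, Finset.inter_empty _⟩
    have h := Finset.single_le_sum (f := fun s : Finset V => lam ^ s.card)
      (fun s _ => by positivity) hemm
    simpa using h
  have hUN : (N:ℝ) ≤ U := by
    rw [hUdef]
    calc (N:ℝ) = ∑ _v : V, (1:ℝ) := by rw [Finset.sum_const, nsmul_eq_mul, mul_one, hNdef]; rfl
      _ ≤ ∑ v : V, Punc Adj lam v := Finset.sum_le_sum (fun v _ => hPunc1 v)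
  have hUpos : (0:ℝ) < U := lt_of_lt_of_le (lt_of_lt_of_le one_pos hNR) hUN
  set A := ∑ v : V, ∑ s ∈ II Adj, lam ^ s.card
      * (xv Adj v (s \ insert v (nbr Adj v)) : ℝ) with hAdef
  have hAnn : 0 ≤ A := by
    rw [hAdef]
    apply Finset.sum_nonneg
    intro v _
    apply Finset.sum_nonneg
    intro s _
    positivity
  have hkey4 := key4 lam hsym hlam Δ d₂ hΔ hcod
  have hexp_e : ((1:ℝ) + lam) ^ (d₂ + 1) ≤ Real.exp 1 := by
    have h3 : lam * ((d₂:ℝ) + 1) = 1 := by rw [hlamdef]; field_simp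
    have h1 : ((1:ℝ) + lam) ^ (d₂ + 1) ≤ Real.exp lam ^ (d₂ + 1) :=
      pow_le_pow_left₀ (by linarith) (by have := Real.add_one_le_exp lam; linarith) _
    have h2 : Real.exp lam ^ (d₂ + 1) = Real.exp (lam * ((d₂:ℝ) + 1)) := by
      rw [← Real.exp_nat_mul]
      congr 1
      push_cast
      ring
    rw [h2, h3] at h1
    exact h1
  have hAU : A ≤ Real.exp 1 * (Δ : ℝ) * U := by
    calc A ≤ (1 + lam) ^ (d₂ + 1) * Δ * U := hkey4
      _ ≤ Real.exp 1 * (Δ : ℝ) * U := by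
          apply mul_le_mul_of_nonneg_right _ hUpos.le
          apply mul_le_mul_of_nonneg_right hexp_e (Nat.cast_nonneg _)
  set L := Real.log (1 + lam) with hLdef
  have hLpos : 0 < L := Real.log_pos (by linarith)
  have hLlam : L ≤ lam := by
    have := Real.log_le_sub_one_of_pos h1lam
    rw [hLdef]
    linarith
  set NT : ℝ := (N:ℝ) * T with hNTdef
  have hNT0 : (0:ℝ) < NT := by positivity
  have hkey3 : ∑ v : V, ∑ s ∈ II Adj, lam ^ s.card
      * ((1 + lam) ^ (1 + xv Adj v (s \ insert v (nbr Adj v))))⁻¹ ≤ U :=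
    Finset.sum_le_sum (fun v _ => key3 lam hirr hlam v)
  have hTot : Tot Adj lam = ∑ s ∈ II Adj, lam ^ s.card := rfl
  have hprodT : ∑ p ∈ (Finset.univ : Finset V) ×ˢ II Adj, lam ^ (p.2.card) = NT := by
    rw [Finset.sum_product]
    calc ∑ v : V, ∑ s ∈ II Adj, lam ^ s.card = ∑ _v : V, T := by
          apply Finset.sum_congr rfl
          intro v _
          rw [hTdef, hTot]
      _ = NT := by
          rw [Finset.sum_const, nsmul_eq_mul, hNTdef, hNdef]
          rfl
  have hprodA : ∑ p ∈ (Finset.univ : Finset V) ×ˢ II Adj,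
      lam ^ (p.2.card) * (xv Adj p.1 (p.2 \ insert p.1 (nbr Adj p.1)) : ℝ) = A := by
    rw [Finset.sum_product, hAdef]
  set w : V × Finset V → ℝ := fun p => lam ^ p.2.card / NT with hwdef
  set z : V × Finset V → ℝ := fun p =>
    -(L * (1 + (xv Adj p.1 (p.2 \ insert p.1 (nbr Adj p.1)) : ℝ))) with hzdef
  have hw0 : ∀ p ∈ (Finset.univ : Finset V) ×ˢ II Adj, 0 ≤ w p := by
    intro p _
    rw [hwdef]
    positivity
  have hw1 : ∑ p ∈ (Finset.univ : Finset V) ×ˢ II Adj, w p = 1 := by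
    rw [hwdef, ← Finset.sum_div, hprodT, div_self hNT0.ne']
  have hjen := jensen_exp ((Finset.univ : Finset V) ×ˢ II Adj) w z hw0 hw1
  have hsum_wz : ∑ p ∈ (Finset.univ : Finset V) ×ˢ II Adj, w p * z p
      = -(L * (1 + A / NT)) := by
    calc ∑ p ∈ (Finset.univ : Finset V) ×ˢ II Adj, w p * z p
        = ∑ p ∈ (Finset.univ : Finset V) ×ˢ II Adj,
            ((-L/NT) * (lam ^ p.2.card)
              + (-L/NT) * (lam ^ p.2.card * (xv Adj p.1 (p.2 \ insert p.1 (nbr Adj p.1)) : ℝ))) := by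
          apply Finset.sum_congr rfl
          intro p _
          rw [hwdef, hzdef]
          ring
      _ = (-L/NT) * (∑ p ∈ (Finset.univ : Finset V) ×ˢ II Adj, lam ^ p.2.card)
            + (-L/NT) * (∑ p ∈ (Finset.univ : Finset V) ×ˢ II Adj,
              lam ^ p.2.card * (xv Adj p.1 (p.2 \ insert p.1 (nbr Adj p.1)) : ℝ)) := by
          rw [Finset.sum_add_distrib, ← Finset.mul_sum, ← Finset.mul_sum]
      _ = (-L/NT) * NT + (-L/NT) * A := by rw [hprodT, hprodA]
      _ = -(L * (1 + A / NT)) := by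
          field_simp
          ring
  have hexpz : ∀ p : V × Finset V, Real.exp (z p)
      = ((1 + lam) ^ (1 + xv Adj p.1 (p.2 \ insert p.1 (nbr Adj p.1))))⁻¹ := by
    intro p
    rw [hzdef]
    rw [Real.exp_neg]
    congr 1
    have hc : L * (1 + (xv Adj p.1 (p.2 \ insert p.1 (nbr Adj p.1)) : ℝ))
        = ((1 + xv Adj p.1 (p.2 \ insert p.1 (nbr Adj p.1)) : ℕ) : ℝ) * L := by
      push_cast
      ring
    rw [hc, Real.exp_nat_mul, hLdef, Real.exp_log h1lam]
  set β := U / NT with hβdef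
  have hβpos : 0 < β := div_pos hUpos hNT0
  have hjen2 : Real.exp (-(L * (1 + A / NT))) ≤ β := by
    calc Real.exp (-(L * (1 + A / NT)))
        = Real.exp (∑ p ∈ (Finset.univ : Finset V) ×ˢ II Adj, w p * z p) := by rw [hsum_wz]
      _ ≤ ∑ p ∈ (Finset.univ : Finset V) ×ˢ II Adj, w p * Real.exp (z p) := hjen
      _ = (∑ p ∈ (Finset.univ : Finset V) ×ˢ II Adj, lam ^ p.2.card
            * ((1 + lam) ^ (1 + xv Adj p.1 (p.2 \ insert p.1 (nbr Adj p.1))))⁻¹) / NT := by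
          rw [Finset.sum_div]
          apply Finset.sum_congr rfl
          intro p _
          rw [hwdef, hexpz p]
          ring
      _ ≤ U / NT := by
          apply (div_le_div_iff_of_pos_right hNT0).mpr
          rw [Finset.sum_product]
          exact hkey3
      _ = β := hβdef.symm
  have hb1 : Real.exp (-(lam * (1 + Real.exp 1 * (Δ:ℝ) * β))) ≤ β := by
    refine le_trans (Real.exp_le_exp.mpr ?_) hjen2
    rw [neg_le_neg_iff]
    have hAβ : A / NT ≤ Real.exp 1 * (Δ:ℝ) * β := by
      rw [hβdef]
      calc A / NT ≤ (Real.exp 1 * (Δ:ℝ) * U) / NT :=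
            (div_le_div_iff_of_pos_right hNT0).mpr hAU
        _ = Real.exp 1 * (Δ:ℝ) * (U / NT) := by ring
    have h1p : (0:ℝ) ≤ 1 + A / NT := by positivity
    calc L * (1 + A / NT) ≤ lam * (1 + A / NT) := mul_le_mul_of_nonneg_right hLlam h1p
      _ ≤ lam * (1 + Real.exp 1 * (Δ:ℝ) * β) := by
          apply mul_le_mul_of_nonneg_left _ hlam.le
          linarith
  have hΔ0 : (0:ℝ) < (Δ:ℝ) := by exact_mod_cast hΔ1
  set g := lam * (Δ:ℝ) * β with hgdef
  have hg0 : 0 < g := by positivity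
  have hmlamΔ : m ≤ lam * (Δ:ℝ) := by
    have h : lam * (Δ:ℝ) = (Δ:ℝ) / ((d₂:ℝ) + 1) := by
      rw [hlamdef]
      ring
    rw [h]
    exact hm
  have hlogm0 : 0 ≤ Real.log m := Real.log_nonneg hm1
  have hm0 : (0:ℝ) < m := by linarith
  have hscalar : Real.log m / (2 * Real.exp 1) ≤ g := by
    by_contra hcon
    push_neg at hcon
    have hβlb : Real.exp (-1) * Real.exp (-(Real.exp 1 * g)) ≤ β := by
      have heq : Real.exp (-1) * Real.exp (-(Real.exp 1 * g))
          = Real.exp (-(1 + Real.exp 1 * g)) := by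
        rw [← Real.exp_add]
        congr 1
        ring
      rw [heq]
      refine le_trans (Real.exp_le_exp.mpr ?_) hb1
      have : lam * (1 + Real.exp 1 * (Δ:ℝ) * β) = lam + Real.exp 1 * g := by
        rw [hgdef]
        ring
      rw [this]
      have : (0:ℝ) ≤ Real.exp 1 * g := by positivity
      linarith
    have h5 : m * (Real.exp (-1) * Real.exp (-(Real.exp 1 * g))) ≤ g := by
      calc m * (Real.exp (-1) * Real.exp (-(Real.exp 1 * g)))
          ≤ m * β := mul_le_mul_of_nonneg_left hβlb hm0.le
        _ ≤ (lam * (Δ:ℝ)) * β := mul_le_mul_of_nonneg_right hmlamΔ hβpos.le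
        _ = g := by rw [hgdef]
    have h6 : Real.exp 1 * g < Real.log m / 2 := by
      have h2e : (0:ℝ) < 2 * Real.exp 1 := by positivity
      rw [lt_div_iff₀ h2e] at hcon
      rw [lt_div_iff₀ (by norm_num : (0:ℝ) < 2)]
      calc Real.exp 1 * g * 2 = g * (2 * Real.exp 1) := by ring
        _ < Real.log m := hcon
    have h7 : Real.exp (-(Real.log m / 2)) < Real.exp (-(Real.exp 1 * g)) := by
      apply Real.exp_lt_exp.mpr
      linarith
    have h8 : m * Real.exp (-(Real.log m / 2)) = Real.exp (Real.log m / 2) := by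
      nth_rewrite 1 [← Real.exp_log hm0]
      rw [← Real.exp_add]
      congr 1
      ring
    have h9 : Real.log m / 2 < Real.exp (Real.log m / 2) := by
      have := Real.add_one_le_exp (Real.log m / 2)
      linarith
    have hchain : Real.exp (-1) * (Real.log m / 2) < g := by
      calc Real.exp (-1) * (Real.log m / 2)
          < Real.exp (-1) * Real.exp (Real.log m / 2) := by
            apply mul_lt_mul_of_pos_left h9 (Real.exp_pos _)
        _ = m * (Real.exp (-1) * Real.exp (-(Real.log m / 2))) := by
            rw [← h8]
            ring
        _ ≤ m * (Real.exp (-1) * Real.exp (-(Real.exp 1 * g))) := by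
            apply mul_le_mul_of_nonneg_left _ hm0.le
            apply mul_le_mul_of_nonneg_left h7.le (Real.exp_pos _).le
        _ ≤ g := h5
    have hneg : Real.exp (-1) = (Real.exp 1)⁻¹ := by
      rw [← Real.exp_neg]
    rw [hneg] at hchain
    have hrw : Real.log m / (2 * Real.exp 1) = (Real.exp 1)⁻¹ * (Real.log m / 2) := by
      ring
    rw [hrw] at hcon
    linarith
  -- final extraction of a maximum independent set
  have hkey1sum : (1 + lam) * (∑ v : V, Pin Adj lam v) = lam * U := by
    rw [Finset.mul_sum, hUdef, Finset.mul_sum]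
    exact Finset.sum_congr rfl (fun v _ => key1 lam hsym hirr v)
  obtain ⟨smax, hsmaxI, hsmax⟩ :=
    Finset.exists_max_image (II Adj) (fun s => s.card) ⟨∅, empty_mem_II Adj⟩
  refine ⟨smax, (mem_II Adj).mp hsmaxI, ?_⟩
  have hPinsum : ∑ v : V, Pin Adj lam v ≤ (smax.card : ℝ) * T := by
    rw [key2 lam]
    calc ∑ s ∈ II Adj, (s.card : ℝ) * lam ^ s.card
        ≤ ∑ s ∈ II Adj, (smax.card : ℝ) * lam ^ s.card := by
          apply Finset.sum_le_sum
          intro s hs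
          apply mul_le_mul_of_nonneg_right _ (by positivity)
          exact_mod_cast hsmax s hs
      _ = (smax.card : ℝ) * T := by rw [← Finset.mul_sum, hTdef, hTot]
  have hfin1 : lam * U ≤ 2 * ((smax.card : ℝ) * T) := by
    have hcT : (0:ℝ) ≤ (smax.card : ℝ) * T := by positivity
    calc lam * U = (1 + lam) * (∑ v : V, Pin Adj lam v) := hkey1sum.symm
      _ ≤ (1 + lam) * ((smax.card : ℝ) * T) := by
          apply mul_le_mul_of_nonneg_left hPinsum (by linarith)
      _ ≤ 2 * ((smax.card : ℝ) * T) := by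
          apply mul_le_mul_of_nonneg_right _ hcT
          linarith
  -- N * log m / (4 e Δ) ≤ smax.card
  have hgcard : g ≤ 2 * (Δ:ℝ) * (smax.card : ℝ) / (N:ℝ) := by
    have hN0 : (0:ℝ) < (N:ℝ) := by linarith
    have expand : g = (Δ:ℝ) * (lam * U) / ((N:ℝ) * T) := by
      rw [hgdef, hβdef, hNTdef]
      ring
    rw [expand, div_le_div_iff₀ (by positivity) hN0]
    calc (Δ:ℝ) * (lam * U) * (N:ℝ) ≤ (Δ:ℝ) * (2 * ((smax.card:ℝ) * T)) * (N:ℝ) := by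
          apply mul_le_mul_of_nonneg_right _ hN0.le
          exact mul_le_mul_of_nonneg_left hfin1 hΔ0.le
      _ = 2 * (Δ:ℝ) * (smax.card:ℝ) * ((N:ℝ) * T) := by ring
  have hfinal : (N:ℝ) * Real.log m / (4 * Real.exp 1 * (Δ:ℝ)) ≤ (smax.card : ℝ) := by
    have hN0 : (0:ℝ) < (N:ℝ) := by linarith
    rw [div_le_iff₀ (by positivity)]
    have t1 : Real.log m ≤ 2 * Real.exp 1 * g := by
      have h2e : (0:ℝ) < 2 * Real.exp 1 := by positivity
      rw [div_le_iff₀ h2e] at hscalar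
      linarith
    have t2 : Real.log m ≤ 2 * Real.exp 1 * (2 * (Δ:ℝ) * (smax.card : ℝ) / (N:ℝ)) := by
      refine le_trans t1 ?_
      apply mul_le_mul_of_nonneg_left hgcard (by positivity)
    have t3 : (N:ℝ) * Real.log m ≤ (N:ℝ) * (2 * Real.exp 1 * (2 * (Δ:ℝ) * (smax.card : ℝ) / (N:ℝ))) :=
      mul_le_mul_of_nonneg_left t2 hN0.le
    calc (N:ℝ) * Real.log m
        ≤ (N:ℝ) * (2 * Real.exp 1 * (2 * (Δ:ℝ) * (smax.card : ℝ) / (N:ℝ))) := t3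
      _ = (smax.card : ℝ) * (4 * Real.exp 1 * (Δ:ℝ)) := by
          field_simp
          ring
  exact hfinal

end GVAux

namespace GVB

variable {G : Type*} [AddCommGroup G] {n : ℕ}

/-- `st` enumerates `s` cyclic intervals of length `b` covering the support of `w`. -/
def Covers (b : ℕ) (st : ℕ → ZMod n) (s : ℕ) (w : ZMod n → G) : Prop :=
  ∀ j, w j ≠ 0 → ∃ m, m < s ∧ (j - st m).val < b

lemma covers_mono {b : ℕ} {st : ℕ → ZMod n} {s s' : ℕ} {w : ZMod n → G}
    (h : Covers b st s w) (hs : s ≤ s') : Covers b st s' w := by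
  intro j hj
  obtain ⟨m, hm, hv⟩ := h j hj
  exact ⟨m, lt_of_lt_of_le hm hs, hv⟩

lemma covers_congr_support {b : ℕ} {st : ℕ → ZMod n} {s : ℕ} {w w' : ZMod n → G}
    (hsupp : ∀ j, w' j ≠ 0 → w j ≠ 0) (h : Covers b st s w) : Covers b st s w' :=
  fun j hj => h j (hsupp j hj)

lemma list_sum_apply (l : List (ZMod n → G)) (j : ZMod n) :
    l.sum j = (l.map (fun e => e j)).sum := by
  induction l with
  | nil => rfl
  | cons e l ih => simp [ih]

lemma sob_covers {b s : ℕ} {w : ZMod n → G} (h : SumOfBursts b s w) :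
    ∃ st : ℕ → ZMod n, Covers b st s w := by
  classical
  obtain ⟨l, hlen, hbursts, hsum⟩ := h
  refine ⟨fun m => if hm : m < s then
    Classical.choose (hbursts (l.get ⟨m, hlen ▸ hm⟩) (l.get_mem _)) else 0, ?_⟩
  intro j hj
  -- find an element of the list that is nonzero at j
  have hex : ∃ e ∈ l, e j ≠ 0 := by
    by_contra hc
    push_neg at hc
    have : l.sum j = 0 := by
      rw [list_sum_apply]
      apply List.sum_eq_zero
      intro x hx
      rw [List.mem_map] at hx
      obtain ⟨e, he, rfl⟩ := hx
      exact hc e he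
    rw [hsum] at this
    exact hj this
  obtain ⟨e, he, hej⟩ := hex
  obtain ⟨⟨m, hm⟩, hget⟩ := List.mem_iff_get.mp he
  have hms : m < s := hlen ▸ hm
  refine ⟨m, hms, ?_⟩
  show (j - (if hm : m < s then
    Classical.choose (hbursts (l.get ⟨m, hlen ▸ hm⟩) (l.get_mem _)) else 0)).val < b
  rw [dif_pos hms]
  have hgeteq : l.get ⟨m, hlen ▸ hms⟩ = e := by
    rw [← hget]
  set i := Classical.choose (hbursts (l.get ⟨m, hlen ▸ hms⟩) (l.get_mem _)) with hi
  obtain ⟨L, hL, hsupp⟩ := Classical.choose_spec (hbursts (l.get ⟨m, hlen ▸ hms⟩) (l.get_mem _))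
  have : j ∈ cycInt n i L := by
    apply hsupp
    rw [hgeteq]
    exact hej
  obtain ⟨k, hk, rfl⟩ := this
  have : (i + (k : ZMod n) - i) = (k : ZMod n) := by ring
  rw [this, ZMod.val_natCast]
  exact lt_of_le_of_lt (Nat.mod_le k n) (lt_of_lt_of_le hk hL)

lemma covers_sob [NeZero n] {b s : ℕ} {w : ZMod n → G}
    (h : ∃ st : ℕ → ZMod n, Covers b st s w) : SumOfBursts b s w := by
  classical
  obtain ⟨st, hcov⟩ := h
  set e : ℕ → ZMod n → G := fun m j =>
    if h2 : ∃ m', m' < s ∧ (j - st m').val < b then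
      (if Nat.find h2 = m then w j else 0) else 0 with he
  refine ⟨List.ofFn (fun m : Fin s => e m), List.length_ofFn, ?_, ?_⟩
  · intro e' he'
    rw [List.mem_ofFn] at he'
    obtain ⟨m, rfl⟩ := he'
    refine ⟨st m, b, le_refl b, ?_⟩
    intro j hj
    rw [he] at hj
    simp only at hj
    by_cases h2 : ∃ m', m' < s ∧ (j - st m').val < b
    · rw [dif_pos h2] at hj
      by_cases h3 : Nat.find h2 = (m : ℕ)
      · have hv : (j - st m).val < b := by
          have := (Nat.find_spec h2).2
          rw [h3] at this
          exact this
        refine ⟨(j - st (m : ℕ)).val, hv, ?_⟩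
        rw [ZMod.natCast_rightInverse (j - st (m : ℕ))]
        ring
      · rw [if_neg h3] at hj
        exact absurd rfl hj
    · rw [dif_neg h2] at hj
      exact absurd rfl hj
  · funext j
    rw [list_sum_apply]
    have : (List.ofFn (fun m : Fin s => e m)).map (fun f => f j)
        = List.ofFn (fun m : Fin s => e m j) := by
      rw [List.map_ofFn]
      rfl
    rw [this, List.sum_ofFn]
    by_cases hw : w j = 0
    · rw [hw]
      apply Finset.sum_eq_zero
      intro m _
      rw [he]
      simp only
      split
      · split
        · exact hw
        · rfl
      · rfl
    · have h2 : ∃ m', m' < s ∧ (j - st m').val < b := hcov j hw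
      have hterm : ∀ m : Fin s, e (m : ℕ) j = if Nat.find h2 = (m : ℕ) then w j else 0 := by
        intro m
        rw [he]
        simp only
        rw [dif_pos h2]
      rw [Finset.sum_congr rfl (fun m _ => hterm m)]
      set m₀ : Fin s := ⟨Nat.find h2, (Nat.find_spec h2).1⟩ with hm₀
      rw [Finset.sum_eq_single m₀]
      · rw [if_pos]
        rw [hm₀]
      · intro m _ hne
        rw [if_neg]
        intro hc
        apply hne
        apply Fin.ext
        rw [← hc, hm₀]
      · intro hc
        exact absurd (Finset.mem_univ m₀) hc

lemma sob_pad [NeZero n] {b s s' : ℕ} {w : ZMod n → G}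
    (h : SumOfBursts b s w) (hs : s ≤ s') : SumOfBursts b s' w := by
  obtain ⟨st, hcov⟩ := sob_covers h
  exact covers_sob ⟨st, covers_mono hcov hs⟩

lemma sob_neg [NeZero n] {b s : ℕ} {w : ZMod n → G}
    (h : SumOfBursts b s w) : SumOfBursts b s (-w) := by
  obtain ⟨st, hcov⟩ := sob_covers h
  refine covers_sob ⟨st, covers_congr_support ?_ hcov⟩
  intro j hj
  simp only [Pi.neg_apply, ne_eq, neg_eq_zero] at hj
  exact hj

lemma covers_add {b s s' : ℕ} {st st' : ℕ → ZMod n} {w w' : ZMod n → G}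
    (h : Covers b st s w) (h' : Covers b st' s' w') :
    Covers b (fun m => if m < s then st m else st' (m - s)) (s + s') (w + w') := by
  intro j hj
  have hor : w j ≠ 0 ∨ w' j ≠ 0 := by
    by_contra hc
    push_neg at hc
    apply hj
    simp [hc.1, hc.2]
  rcases hor with hw | hw
  · obtain ⟨m, hm, hv⟩ := h j hw
    refine ⟨m, by omega, ?_⟩
    simp only [if_pos hm]
    exact hv
  · obtain ⟨m, hm, hv⟩ := h' j hw
    refine ⟨s + m, by omega, ?_⟩
    have : ¬ (s + m < s) := by omega
    simp only [if_neg this, Nat.add_sub_cancel_left]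
    exact hv

lemma sob_add [NeZero n] {b s s' : ℕ} {w w' : ZMod n → G}
    (h : SumOfBursts b s w) (h' : SumOfBursts b s' w') :
    SumOfBursts b (s + s') (w + w') := by
  obtain ⟨st, hcov⟩ := sob_covers h
  obtain ⟨st', hcov'⟩ := sob_covers h'
  exact covers_sob ⟨_, covers_add hcov hcov'⟩

lemma sob_univ [NeZero n] {b : ℕ} (hb : 1 ≤ b) (w : ZMod n → G) :
    SumOfBursts b n w := by
  apply covers_sob
  refine ⟨fun m => (m : ZMod n), ?_⟩
  intro j hj
  refine ⟨j.val, ZMod.val_lt j, ?_⟩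
  show (j - ((j.val : ℕ) : ZMod n)).val < b
  rw [ZMod.natCast_rightInverse j]
  simp only [sub_self, ZMod.val_zero]
  omega

section Counting

open scoped Classical

variable [Fintype G]

def ext' (s : ℕ) (stF : Fin s → ZMod n) : ℕ → ZMod n :=
  fun m => if h : m < s then stF ⟨m, h⟩ else 0

lemma ext'_eq {s : ℕ} (stF : Fin s → ZMod n) {m : ℕ} (h : m < s) :
    ext' s stF m = stF ⟨m, h⟩ := dif_pos h

noncomputable def recon (b s : ℕ) (stF : Fin s → ZMod n) (pat : Fin s → Fin b → G) :
    ZMod n → G :=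
  fun j =>
    if h : ∃ m, m < s ∧ (j - ext' s stF m).val < b then
      pat ⟨Nat.find h, (Nat.find_spec h).1⟩
        ⟨(j - ext' s stF (Nat.find h)).val, (Nat.find_spec h).2⟩
    else 0

lemma recon_complete [NeZero n] {b s : ℕ} {w : ZMod n → G} {stF : Fin s → ZMod n}
    (hcov : Covers b (ext' s stF) s w) :
    recon b s stF (fun m k => w (stF m + ((k : ℕ) : ZMod n))) = w := by
  funext j
  by_cases h : ∃ m, m < s ∧ (j - ext' s stF m).val < b
  · show dite _ _ _ = w j
    rw [dif_pos h]
    show w (stF ⟨Nat.find h, (Nat.find_spec h).1⟩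
      + (((j - ext' s stF (Nat.find h)).val : ℕ) : ZMod n)) = w j
    rw [ZMod.natCast_rightInverse (j - ext' s stF (Nat.find h)),
      ← ext'_eq stF (Nat.find_spec h).1]
    congr 1
    ring
  · show dite _ _ _ = w j
    rw [dif_neg h]
    by_contra hne
    exact h (hcov j (Ne.symm hne))

lemma covers_to_ext [NeZero n] {b s : ℕ} {w : ZMod n → G} {st : ℕ → ZMod n}
    (hcov : Covers b st s w) : Covers b (ext' s (fun m : Fin s => st m)) s w := by
  intro j hj
  obtain ⟨m, hm, hv⟩ := hcov j hj
  refine ⟨m, hm, ?_⟩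
  rw [ext'_eq _ hm]
  exact hv

lemma card_coverable [NeZero n] (b s : ℕ) :
    ((Finset.univ : Finset (ZMod n → G)).filter
        (fun w => ∃ st : ℕ → ZMod n, Covers b st s w)).card
      ≤ n ^ s * (Fintype.card G) ^ (b * s) := by
  have hsub : ((Finset.univ : Finset (ZMod n → G)).filter
        (fun w => ∃ st : ℕ → ZMod n, Covers b st s w))
      ⊆ (Finset.univ : Finset ((Fin s → ZMod n) × (Fin s → Fin b → G))).image
          (fun p => recon b s p.1 p.2) := by
    intro w hw
    obtain ⟨st, hcov⟩ := (Finset.mem_filter.mp hw).2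
    rw [Finset.mem_image]
    exact ⟨(fun m : Fin s => st m,
      fun m k => w ((fun m : Fin s => st m) m + ((k : ℕ) : ZMod n))),
      Finset.mem_univ _, recon_complete (covers_to_ext hcov)⟩
  calc ((Finset.univ : Finset (ZMod n → G)).filter
        (fun w => ∃ st : ℕ → ZMod n, Covers b st s w)).card
      ≤ ((Finset.univ : Finset ((Fin s → ZMod n) × (Fin s → Fin b → G))).image
          (fun p => recon b s p.1 p.2)).card := Finset.card_le_card hsub
    _ ≤ (Finset.univ : Finset ((Fin s → ZMod n) × (Fin s → Fin b → G))).card :=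
        Finset.card_image_le
    _ = n ^ s * (Fintype.card G) ^ (b * s) := by
        rw [Finset.card_univ, Fintype.card_prod, Fintype.card_fun, Fintype.card_fun,
          Fintype.card_fun, ZMod.card]
        simp only [Fintype.card_fin]
        rw [← pow_mul]

lemma card_fn_constrained [NeZero n] (s : ℕ) (i₀ : Fin s) (A : Finset (ZMod n)) :
    ((Finset.univ : Finset (Fin s → ZMod n)).filter (fun f => f i₀ ∈ A)).card
      ≤ A.card * n ^ (s - 1) := by
  have h1 : ((Finset.univ : Finset (Fin s → ZMod n)).filter (fun f => f i₀ ∈ A)).card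
      ≤ (A ×ˢ (Finset.univ : Finset ({m : Fin s // m ≠ i₀} → ZMod n))).card := by
    apply Finset.card_le_card_of_injOn
      (fun f => (f i₀, fun m : {m : Fin s // m ≠ i₀} => f m.1))
    · intro f hf
      rw [Finset.mem_coe] at hf ⊢
      rw [Finset.mem_product]
      exact ⟨(Finset.mem_filter.mp hf).2, Finset.mem_univ _⟩
    · intro f hf g hg hfg
      rw [Prod.mk.injEq] at hfg
      funext m
      by_cases hm : m = i₀
      · rw [hm]; exact hfg.1
      · exact congrFun hfg.2 ⟨m, hm⟩
  have h2 : Fintype.card {m : Fin s // m ≠ i₀} = s - 1 := by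
    have := Fintype.card_subtype_compl (fun m : Fin s => m = i₀)
    rw [Fintype.card_subtype_eq, Fintype.card_fin] at this
    exact this
  calc ((Finset.univ : Finset (Fin s → ZMod n)).filter (fun f => f i₀ ∈ A)).card
      ≤ (A ×ˢ (Finset.univ : Finset ({m : Fin s // m ≠ i₀} → ZMod n))).card := h1
    _ = A.card * n ^ (s - 1) := by
        rw [Finset.card_product, Finset.card_univ, Fintype.card_fun, ZMod.card, h2]

lemma card_coverable_near [NeZero n] (b s : ℕ) (A : Finset (ZMod n)) :
    ((Finset.univ : Finset (ZMod n → G)).filter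
        (fun z => ∃ st : ℕ → ZMod n, Covers b st s z ∧ ∃ m, m < s ∧ st m ∈ A)).card
      ≤ s * (A.card * n ^ (s - 1)) * (Fintype.card G) ^ (b * s) := by
  set ST := (Finset.univ : Finset (Fin s → ZMod n)).filter (fun f => ∃ i₀, f i₀ ∈ A) with hST
  have hSTcard : ST.card ≤ s * (A.card * n ^ (s - 1)) := by
    have hsub : ST ⊆ (Finset.univ : Finset (Fin s)).biUnion
        (fun i₀ => (Finset.univ : Finset (Fin s → ZMod n)).filter (fun f => f i₀ ∈ A)) := by
      intro f hf
      obtain ⟨i₀, hi₀⟩ := (Finset.mem_filter.mp hf).2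
      rw [Finset.mem_biUnion]
      exact ⟨i₀, Finset.mem_univ _, Finset.mem_filter.mpr ⟨Finset.mem_univ _, hi₀⟩⟩
    calc ST.card ≤ ((Finset.univ : Finset (Fin s)).biUnion
          (fun i₀ => (Finset.univ : Finset (Fin s → ZMod n)).filter (fun f => f i₀ ∈ A))).card :=
          Finset.card_le_card hsub
      _ ≤ ∑ i₀ : Fin s, ((Finset.univ : Finset (Fin s → ZMod n)).filter
            (fun f => f i₀ ∈ A)).card := Finset.card_biUnion_le
      _ ≤ ∑ _i₀ : Fin s, A.card * n ^ (s - 1) :=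
          Finset.sum_le_sum (fun i₀ _ => card_fn_constrained s i₀ A)
      _ = s * (A.card * n ^ (s - 1)) := by
          rw [Finset.sum_const, Finset.card_univ, Fintype.card_fin, smul_eq_mul]
  have hsub2 : ((Finset.univ : Finset (ZMod n → G)).filter
        (fun z => ∃ st : ℕ → ZMod n, Covers b st s z ∧ ∃ m, m < s ∧ st m ∈ A))
      ⊆ (ST ×ˢ (Finset.univ : Finset (Fin s → Fin b → G))).image
          (fun p => recon b s p.1 p.2) := by
    intro z hz
    obtain ⟨st, hcov, m₀, hm₀, hA⟩ := (Finset.mem_filter.mp hz).2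
    rw [Finset.mem_image]
    refine ⟨(fun m : Fin s => st m,
      fun m k => z ((fun m : Fin s => st m) m + ((k : ℕ) : ZMod n))), ?_, ?_⟩
    · rw [Finset.mem_product]
      refine ⟨Finset.mem_filter.mpr ⟨Finset.mem_univ _, ⟨⟨m₀, hm₀⟩, hA⟩⟩, Finset.mem_univ _⟩
    · exact recon_complete (covers_to_ext hcov)
  calc ((Finset.univ : Finset (ZMod n → G)).filter
        (fun z => ∃ st : ℕ → ZMod n, Covers b st s z ∧ ∃ m, m < s ∧ st m ∈ A)).card
      ≤ ((ST ×ˢ (Finset.univ : Finset (Fin s → Fin b → G))).image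
          (fun p => recon b s p.1 p.2)).card := Finset.card_le_card hsub2
    _ ≤ (ST ×ˢ (Finset.univ : Finset (Fin s → Fin b → G))).card := Finset.card_image_le
    _ = ST.card * (Fintype.card G) ^ (b * s) := by
        rw [Finset.card_product, Finset.card_univ, Fintype.card_fun, Fintype.card_fun]
        simp only [Fintype.card_fin]
        rw [← pow_mul]
    _ ≤ s * (A.card * n ^ (s - 1)) * (Fintype.card G) ^ (b * s) := by
        apply Nat.mul_le_mul_right
        exact hSTcard

lemma card_supp_le [NeZero n] {b s : ℕ} {st : ℕ → ZMod n} {w : ZMod n → G}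
    (h : Covers b st s w) :
    ((Finset.univ : Finset (ZMod n)).filter (fun j => w j ≠ 0)).card ≤ s * b := by
  have hsub : ((Finset.univ : Finset (ZMod n)).filter (fun j => w j ≠ 0))
      ⊆ (Finset.range s).biUnion
        (fun m => (Finset.range b).image (fun k => st m + ((k : ℕ) : ZMod n))) := by
    intro j hj
    obtain ⟨m, hm, hv⟩ := h j (Finset.mem_filter.mp hj).2
    rw [Finset.mem_biUnion]
    refine ⟨m, Finset.mem_range.mpr hm, ?_⟩
    rw [Finset.mem_image]
    refine ⟨(j - st m).val, Finset.mem_range.mpr hv, ?_⟩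
    rw [ZMod.natCast_rightInverse (j - st m)]
    ring
  calc ((Finset.univ : Finset (ZMod n)).filter (fun j => w j ≠ 0)).card
      ≤ ((Finset.range s).biUnion
        (fun m => (Finset.range b).image (fun k => st m + ((k : ℕ) : ZMod n)))).card :=
        Finset.card_le_card hsub
    _ ≤ ∑ m ∈ Finset.range s, ((Finset.range b).image
          (fun k => st m + ((k : ℕ) : ZMod n))).card := Finset.card_biUnion_le
    _ ≤ ∑ _m ∈ Finset.range s, b := by
        apply Finset.sum_le_sum
        intro m _
        calc ((Finset.range b).image (fun k => st m + ((k : ℕ) : ZMod n))).card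
            ≤ (Finset.range b).card := Finset.card_image_le
          _ = b := Finset.card_range b
    _ = s * b := by rw [Finset.sum_const, Finset.card_range, smul_eq_mul]

lemma helperA [NeZero n] {b : ℕ} (u v i : ZMod n)
    (h1 : (u - i).val < b) (h2 : (v - i).val < b) :
    (u - v).val < b ∨ (v - u).val < b := by
  have e1 : (((u - i).val : ℕ) : ZMod n) = u - i := ZMod.natCast_rightInverse _
  have e2 : (((v - i).val : ℕ) : ZMod n) = v - i := ZMod.natCast_rightInverse _
  rcases le_total (v - i).val (u - i).val with h | h
  · left
    have he : u - v = (((u - i).val - (v - i).val : ℕ) : ZMod n) := by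
      rw [Nat.cast_sub h, e1, e2]
      ring
    rw [he, ZMod.val_natCast]
    have := Nat.mod_le ((u - i).val - (v - i).val) n
    omega
  · right
    have he : v - u = (((v - i).val - (u - i).val : ℕ) : ZMod n) := by
      rw [Nat.cast_sub h, e1, e2]
      ring
    rw [he, ZMod.val_natCast]
    have := Nat.mod_le ((v - i).val - (u - i).val) n
    omega

lemma helperA' [NeZero n] {b : ℕ} (u v j : ZMod n)
    (h1 : (j - u).val < b) (h2 : (j - v).val < b) :
    (u - v).val < b ∨ (v - u).val < b := by
  have e1 : (((j - u).val : ℕ) : ZMod n) = j - u := ZMod.natCast_rightInverse _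
  have e2 : (((j - v).val : ℕ) : ZMod n) = j - v := ZMod.natCast_rightInverse _
  rcases le_total (j - u).val (j - v).val with h | h
  · left
    have he : u - v = (((j - v).val - (j - u).val : ℕ) : ZMod n) := by
      rw [Nat.cast_sub h, e1, e2]
      ring
    rw [he, ZMod.val_natCast]
    have := Nat.mod_le ((j - v).val - (j - u).val) n
    omega
  · right
    have he : v - u = (((j - u).val - (j - v).val : ℕ) : ZMod n) := by
      rw [Nat.cast_sub h, e1, e2]
      ring
    rw [he, ZMod.val_natCast]
    have := Nat.mod_le ((j - u).val - (j - v).val) n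
    omega

lemma helperB [NeZero n] {b c : ℕ} (i j p : ZMod n)
    (h1 : (j - i).val < b) (h2 : (p - j).val < c) :
    (p - i).val < b + c := by
  have e1 : (((j - i).val : ℕ) : ZMod n) = j - i := ZMod.natCast_rightInverse _
  have e2 : (((p - j).val : ℕ) : ZMod n) = p - j := ZMod.natCast_rightInverse _
  have he : p - i = (((j - i).val + (p - j).val : ℕ) : ZMod n) := by
    rw [Nat.cast_add, e1, e2]
    ring
  rw [he, ZMod.val_natCast]
  have := Nat.mod_le ((j - i).val + (p - j).val) n
  omega

open scoped Classical in
lemma card_cod [NeZero n] [Fintype G] {b T : ℕ} (hb : 1 ≤ b) (hT : 1 ≤ T)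
    (w : ZMod n → G) (hw : w ≠ 0) {stw : ℕ → ZMod n} (hcw : Covers b stw T w) :
    ((Finset.univ : Finset (ZMod n → G)).filter (fun z =>
        (∃ st : ℕ → ZMod n, Covers b st T z) ∧ (∃ st : ℕ → ZMod n, Covers b st T (z - w)))).card
      ≤ (3 * T^2 * b^2 + 1) * (n ^ (T-1) * (Fintype.card G) ^ (b * T)) := by
  set NEAR2 := ((Finset.univ : Finset (ZMod n)).filter (fun j => w j ≠ 0)).biUnion
      (fun p => ((Finset.range b).image (fun k => p + ((k:ℕ) : ZMod n)))
          ∪ ((Finset.range (2*b)).image (fun k => p - ((k:ℕ) : ZMod n)))) with hN2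
  have hN2card : NEAR2.card ≤ 3 * T * b^2 := by
    calc NEAR2.card ≤ ∑ p ∈ ((Finset.univ : Finset (ZMod n)).filter (fun j => w j ≠ 0)),
          (((Finset.range b).image (fun k => p + ((k:ℕ) : ZMod n)))
            ∪ ((Finset.range (2*b)).image (fun k => p - ((k:ℕ) : ZMod n)))).card :=
          Finset.card_biUnion_le
      _ ≤ ∑ _p ∈ ((Finset.univ : Finset (ZMod n)).filter (fun j => w j ≠ 0)), (b + 2*b) := by
          apply Finset.sum_le_sum
          intro p _
          calc (((Finset.range b).image (fun k => p + ((k:ℕ) : ZMod n)))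
                ∪ ((Finset.range (2*b)).image (fun k => p - ((k:ℕ) : ZMod n)))).card
              ≤ (((Finset.range b).image (fun k => p + ((k:ℕ) : ZMod n)))).card
                + (((Finset.range (2*b)).image (fun k => p - ((k:ℕ) : ZMod n)))).card :=
              Finset.card_union_le _ _
            _ ≤ b + 2*b := by
                apply Nat.add_le_add
                · exact le_trans Finset.card_image_le (le_of_eq (Finset.card_range b))
                · exact le_trans Finset.card_image_le (le_of_eq (Finset.card_range (2*b)))
      _ = ((Finset.univ : Finset (ZMod n)).filter (fun j => w j ≠ 0)).card * (b + 2*b) := by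
          rw [Finset.sum_const, smul_eq_mul]
      _ ≤ (T * b) * (b + 2*b) := by
          apply Nat.mul_le_mul_right
          exact card_supp_le hcw
      _ = 3 * T * b^2 := by ring
  have hN2mem : ∀ i p : ZMod n, w p ≠ 0 → ((i - p).val < b ∨ (p - i).val < 2*b) →
      i ∈ NEAR2 := by
    intro i p hp hcase
    rw [hN2, Finset.mem_biUnion]
    refine ⟨p, Finset.mem_filter.mpr ⟨Finset.mem_univ _, hp⟩, ?_⟩
    rw [Finset.mem_union]
    rcases hcase with h | h
    · left
      rw [Finset.mem_image]
      refine ⟨(i - p).val, Finset.mem_range.mpr h, ?_⟩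
      rw [ZMod.natCast_rightInverse (i - p)]
      ring
    · right
      rw [Finset.mem_image]
      refine ⟨(p - i).val, Finset.mem_range.mpr h, ?_⟩
      rw [ZMod.natCast_rightInverse (p - i)]
      ring
  set NearSet := ((Finset.univ : Finset (ZMod n → G)).filter
      (fun z => ∃ st : ℕ → ZMod n, Covers b st T z ∧ ∃ m, m < T ∧ st m ∈ NEAR2)) with hNS
  set FarSet := ((Finset.univ : Finset (ZMod n → G)).filter
      (fun z => ∃ st : ℕ → ZMod n, Covers b st (T-1) z)) with hFS
  have hsplit : ((Finset.univ : Finset (ZMod n → G)).filter (fun z =>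
        (∃ st : ℕ → ZMod n, Covers b st T z) ∧ (∃ st : ℕ → ZMod n, Covers b st T (z - w))))
      ⊆ NearSet ∪ FarSet := by
    intro z hz
    obtain ⟨⟨stz, hcz⟩, ⟨stzw, hczw⟩⟩ := (Finset.mem_filter.mp hz).2
    by_cases hnear : ∃ j, z j ≠ 0 ∧ ∃ p, w p ≠ 0 ∧ ((j - p).val < b ∨ (p - j).val < b)
    · -- near case
      apply Finset.mem_union_left
      obtain ⟨j, hjz, p, hp, hor⟩ := hnear
      obtain ⟨m, hmT, hmv⟩ := hcz j hjz
      refine Finset.mem_filter.mpr ⟨Finset.mem_univ _, stz, hcz, m, hmT, ?_⟩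
      apply hN2mem (stz m) p hp
      rcases hor with h | h
      · rcases helperA' (stz m) p j hmv h with h2 | h2
        · exact Or.inl h2
        · exact Or.inr (lt_of_lt_of_le h2 (by omega))
      · exact Or.inr (by
          have := helperB (stz m) j p hmv h
          omega)
    · -- far case
      have hfar : ∀ j, z j ≠ 0 → ∀ p, w p ≠ 0 →
          ¬((j - p).val < b ∨ (p - j).val < b) := by
        intro j hj p hp hor
        exact hnear ⟨j, hj, p, hp, hor⟩
      apply Finset.mem_union_right
      obtain ⟨p₀, hp₀⟩ : ∃ p, w p ≠ 0 := by
        by_contra hc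
        push_neg at hc
        exact hw (funext fun p => hc p)
      have hzp₀ : z p₀ = 0 := by
        by_contra hzz
        apply hfar p₀ hzz p₀ hp₀
        left
        rw [sub_self, ZMod.val_zero]
        omega
      have hzwp₀ : (z - w) p₀ ≠ 0 := by
        rw [Pi.sub_apply, hzp₀, zero_sub]
        exact neg_ne_zero.mpr hp₀
      obtain ⟨m₀, hm₀T, hm₀v⟩ := hczw p₀ hzwp₀
      refine Finset.mem_filter.mpr ⟨Finset.mem_univ _,
        (fun i => stzw (if i < m₀ then i else i + 1)), ?_⟩
      intro j hj
      have hwj : w j = 0 := by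
        by_contra hwj
        apply hfar j hj j hwj
        left
        rw [sub_self, ZMod.val_zero]
        omega
      have hzwj : (z - w) j ≠ 0 := by
        rw [Pi.sub_apply, hwj, sub_zero]
        exact hj
      obtain ⟨m, hmT, hmv⟩ := hczw j hzwj
      have hmne : m ≠ m₀ := by
        intro he
        rw [he] at hmv
        rcases helperA j p₀ (stzw m₀) hmv hm₀v with h2 | h2
        · exact hfar j hj p₀ hp₀ (Or.inl h2)
        · exact hfar j hj p₀ hp₀ (Or.inr h2)
      by_cases hc : m < m₀
      · refine ⟨m, by omega, ?_⟩
        show (j - stzw (if m < m₀ then m else m + 1)).val < b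
        rw [if_pos hc]
        exact hmv
      · refine ⟨m - 1, by omega, ?_⟩
        show (j - stzw (if m - 1 < m₀ then m - 1 else m - 1 + 1)).val < b
        have h1 : ¬ (m - 1 < m₀) := by omega
        rw [if_neg h1]
        have h2 : m - 1 + 1 = m := by omega
        rw [h2]
        exact hmv
  have hQ1 : 1 ≤ Fintype.card G := Fintype.card_pos
  calc ((Finset.univ : Finset (ZMod n → G)).filter (fun z =>
        (∃ st : ℕ → ZMod n, Covers b st T z) ∧ (∃ st : ℕ → ZMod n, Covers b st T (z - w)))).card
      ≤ (NearSet ∪ FarSet).card := Finset.card_le_card hsplit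
    _ ≤ NearSet.card + FarSet.card := Finset.card_union_le _ _
    _ ≤ T * (NEAR2.card * n ^ (T-1)) * (Fintype.card G) ^ (b * T)
          + n ^ (T-1) * (Fintype.card G) ^ (b * (T-1)) := by
        apply Nat.add_le_add
        · exact card_coverable_near b T NEAR2
        · exact card_coverable b (T-1)
    _ ≤ T * ((3 * T * b^2) * n ^ (T-1)) * (Fintype.card G) ^ (b * T)
          + n ^ (T-1) * (Fintype.card G) ^ (b * T) := by
        apply Nat.add_le_add
        · apply Nat.mul_le_mul_right
          apply Nat.mul_le_mul_left
          apply Nat.mul_le_mul_right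
          exact hN2card
        · apply Nat.mul_le_mul_left
          apply Nat.pow_le_pow_right hQ1
          exact Nat.mul_le_mul_left b (by omega)
    _ = (3 * T^2 * b^2 + 1) * (n ^ (T-1) * (Fintype.card G) ^ (b * T)) := by ring

end Counting

end GVB

/-- improved GV bound: there exists a (t,b)-burst-correcting code with
|C| ≥ c·q^n·(log n)/n^{2t} for some constant c > 0 and all large n, i.e. redundancy
at most 2t·log_q n − log_q log n + O(1). -/
theorem improved_gv_bursts {G : Type*} [AddCommGroup G] [Fintype G] (q t b : ℕ)
    (hq : Fintype.card G = q) (hq2 : 2 ≤ q) (hb : 1 ≤ b) (ht : 1 ≤ t) :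
    ∃ c : ℝ, 0 < c ∧ ∃ n₀ : ℕ, ∀ n ≥ n₀, ∃ C : Set (ZMod n → G),
      IsBurstCorrecting t b C ∧
      c * (q : ℝ) ^ n * Real.log n / (n : ℝ) ^ (2 * t) ≤ (C.ncard : ℝ) := by
  classical
  set T := 2 * t with hT
  have hT1 : 1 ≤ T := by omega
  set K : ℕ := 3 * T^2 * b^2 + 1 with hK
  have hK1 : 1 ≤ K := by omega
  have hqR : (0:ℝ) < (q:ℝ) := by exact_mod_cast (show 0 < q by omega)
  have hcpos : (0:ℝ) < (8 * Real.exp 1 * (q:ℝ) ^ (b * T))⁻¹ := by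
    apply inv_pos.mpr
    apply mul_pos (by positivity)
    exact pow_pos hqR _
  refine ⟨(8 * Real.exp 1 * (q:ℝ) ^ (b * T))⁻¹, hcpos, (2*K)^2 + 2*K + 1, ?_⟩
  intro n hn
  haveI : NeZero n := ⟨by omega⟩
  have hn1 : 1 ≤ n := by omega
  have hnK : 2*K ≤ n := by omega
  have hnK2 : (2*K)^2 ≤ n := by omega
  set Adj : (ZMod n → G) → (ZMod n → G) → Prop :=
    fun u v => u ≠ v ∧ SumOfBursts b T (u - v) with hAdj
  haveI hDR : DecidableRel Adj := fun u v => Classical.propDecidable _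
  haveI hDE : DecidableEq (ZMod n → G) := Classical.decEq _
  have hsym : ∀ x y, Adj x y → Adj y x := by
    intro x y hxy
    obtain ⟨hne, hsob⟩ := hxy
    refine ⟨hne.symm, ?_⟩
    have h2 := GVB.sob_neg hsob
    rw [neg_sub] at h2
    exact h2
  have hirr : ∀ x, ¬ Adj x x := fun x h => h.1 rfl
  set Δ : ℕ := n ^ T * q ^ (b * T) with hΔdef
  set d₂ : ℕ := K * (n ^ (T-1) * q ^ (b * T)) with hd₂def
  have hΔ1 : 1 ≤ Δ := by
    rw [hΔdef]
    have h1 : 1 ≤ n ^ T := Nat.one_le_pow _ _ (by omega)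
    have h2 : 1 ≤ q ^ (b * T) := Nat.one_le_pow _ _ (by omega)
    exact Nat.one_le_iff_ne_zero.mpr (Nat.mul_ne_zero (by omega) (by omega))
  have hΔbound : ∀ v, (GVAux.nbr Adj v).card ≤ Δ := by
    intro v
    have h1 : (GVAux.nbr Adj v).card ≤ ((Finset.univ : Finset (ZMod n → G)).filter
        (fun z => ∃ st : ℕ → ZMod n, GVB.Covers b st T z)).card := by
      apply Finset.card_le_card_of_injOn (fun x => v - x)
      · intro x hx
        rw [Finset.mem_coe] at hx ⊢
        rw [Finset.mem_filter]
        refine ⟨Finset.mem_univ _, ?_⟩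
        have hadj : Adj v x := (GVAux.mem_nbr _).mp hx
        exact GVB.sob_covers hadj.2
      · intro x _ y _ h
        exact sub_right_injective h
    have h2 := GVB.card_coverable (G := G) (n := n) b T
    rw [hq] at h2
    exact le_trans h1 h2
  have hcodbound : ∀ v u, Adj v u → ((GVAux.nbr Adj u) ∩ (GVAux.nbr Adj v)).card ≤ d₂ := by
    intro v u hadj
    have hwne : (u - v) ≠ 0 := sub_ne_zero.mpr (fun h => hadj.1 h.symm)
    obtain ⟨stw, hstw⟩ := GVB.sob_covers hadj.2
    have hcw : GVB.Covers b stw T (u - v) := by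
      apply GVB.covers_congr_support _ hstw
      intro j hj
      simp only [Pi.sub_apply] at hj ⊢
      intro hc
      apply hj
      rw [sub_eq_zero] at hc ⊢
      exact hc.symm
    have hmain := GVB.card_cod hb hT1 (u - v) hwne hcw
    rw [hq] at hmain
    have h1 : ((GVAux.nbr Adj u) ∩ (GVAux.nbr Adj v)).card
        ≤ ((Finset.univ : Finset (ZMod n → G)).filter (fun z =>
            (∃ st : ℕ → ZMod n, GVB.Covers b st T z)
            ∧ (∃ st : ℕ → ZMod n, GVB.Covers b st T (z - (u - v))))).card := by
      apply Finset.card_le_card_of_injOn (fun x => u - x)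
      · intro x hx
        rw [Finset.mem_coe] at hx ⊢
        rw [Finset.mem_inter] at hx
        have h1 : Adj u x := (GVAux.mem_nbr _).mp hx.1
        have h2 : Adj v x := (GVAux.mem_nbr _).mp hx.2
        rw [Finset.mem_filter]
        refine ⟨Finset.mem_univ _, GVB.sob_covers h1.2, ?_⟩
        have he : (u - x) - (u - v) = v - x := by abel
        rw [he]
        exact GVB.sob_covers h2.2
      · intro x _ y _ h
        exact sub_right_injective h
    exact le_trans h1 hmain
  -- the density parameter m
  set m : ℝ := (n:ℝ) / (2*K) with hmdef
  have h2K0 : (0:ℝ) < 2*K := by positivity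
  have hm1 : 1 ≤ m := by
    rw [hmdef, le_div_iff₀ h2K0, one_mul]
    exact_mod_cast hnK
  have hX1 : 1 ≤ n ^ (T-1) * q ^ (b * T) := by
    have h1 : 1 ≤ n ^ (T-1) := Nat.one_le_pow _ _ (by omega)
    have h2 : 1 ≤ q ^ (b * T) := Nat.one_le_pow _ _ (by omega)
    exact Nat.one_le_iff_ne_zero.mpr (Nat.mul_ne_zero (by omega) (by omega))
  have hΔn : Δ = n * (n ^ (T-1) * q ^ (b * T)) := by
    rw [hΔdef]
    have hTT : T = (T-1)+1 := by omega
    calc n ^ T * q ^ (b*T) = n ^ ((T-1)+1) * q ^ (b*T) := by rw [← hTT]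
      _ = n * (n ^ (T-1) * q ^ (b * T)) := by rw [pow_succ]; ring
  have hd₂2 : d₂ + 1 ≤ 2 * K * (n ^ (T-1) * q ^ (b * T)) := by
    rw [hd₂def]
    have h1 : 1 ≤ K * (n ^ (T-1) * q ^ (b * T)) :=
      Nat.one_le_iff_ne_zero.mpr (Nat.mul_ne_zero (by omega) (by omega))
    calc K * (n ^ (T-1) * q ^ (b * T)) + 1
        ≤ K * (n ^ (T-1) * q ^ (b * T)) + K * (n ^ (T-1) * q ^ (b * T)) :=
          Nat.add_le_add_left h1 _
      _ = 2 * K * (n ^ (T-1) * q ^ (b * T)) := by ring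
  have hmΔ : m ≤ (Δ:ℝ)/((d₂:ℝ)+1) := by
    rw [hmdef, div_le_div_iff₀ h2K0 (by positivity)]
    have hcast : ((d₂:ℝ)+1) ≤ 2 * K * ((n ^ (T-1) * q ^ (b * T) : ℕ) : ℝ) := by
      have := hd₂2
      push_cast
      exact_mod_cast this
    calc (n:ℝ) * ((d₂:ℝ)+1) ≤ (n:ℝ) * (2 * K * ((n ^ (T-1) * q ^ (b * T) : ℕ) : ℝ)) := by
          apply mul_le_mul_of_nonneg_left hcast (by positivity)
      _ = (Δ:ℝ) * (2*K) := by
          rw [hΔn]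
          push_cast
          ring
  obtain ⟨smax, hsindep, hscard⟩ :=
    GVAux.exists_big_indep Adj hsym hirr Δ d₂ hΔ1 hΔbound hcodbound m hm1 hmΔ
  refine ⟨(smax : Set (ZMod n → G)), ?_, ?_⟩
  · -- burst correcting
    intro u hu v hv huv
    rw [Set.eq_empty_iff_forall_notMem]
    intro y hy
    obtain ⟨hy1, hy2⟩ := hy
    have hy1' : burstDist b u y ≤ t := hy1
    have hy2' : burstDist b v y ≤ t := hy2
    have hxt : SumOfBursts b t (u - y) := by
      have hne : {k | SumOfBursts b k (u - y)}.Nonempty := ⟨n, GVB.sob_univ hb _⟩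
      have hmem : SumOfBursts b (burstDist b u y) (u - y) := Nat.sInf_mem hne
      exact GVB.sob_pad hmem hy1'
    have hyt : SumOfBursts b t (v - y) := by
      have hne : {k | SumOfBursts b k (v - y)}.Nonempty := ⟨n, GVB.sob_univ hb _⟩
      have hmem : SumOfBursts b (burstDist b v y) (v - y) := Nat.sInf_mem hne
      exact GVB.sob_pad hmem hy2'
    have hsum : SumOfBursts b (t + t) ((u - y) + (-(v - y))) :=
      GVB.sob_add hxt (GVB.sob_neg hyt)
    have he : (u - y) + (-(v - y)) = u - v := by abel
    have hTt : t + t = T := by omega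
    rw [he, hTt] at hsum
    have hadj : Adj u v := ⟨huv, hsum⟩
    exact hsindep u (Finset.mem_coe.mp hu) v (Finset.mem_coe.mp hv) hadj
  · -- size bound
    rw [Set.ncard_coe_finset]
    have hcardV : (Fintype.card (ZMod n → G)) = q ^ n := by
      rw [Fintype.card_fun, ZMod.card, hq]
    rw [hcardV] at hscard
    have hn0R : (0:ℝ) < (n:ℝ) := by exact_mod_cast hn1
    have hlogm : Real.log n / 2 ≤ Real.log m := by
      rw [hmdef, Real.log_div (ne_of_gt hn0R) (ne_of_gt h2K0)]
      have h1 : Real.log (2*K) ≤ Real.log n / 2 := by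
        have h2 : ((2*K:ℕ):ℝ)^2 ≤ (n:ℝ) := by
          push_cast
          exact_mod_cast hnK2
        have h3 : Real.log (((2*K:ℕ):ℝ)^2) ≤ Real.log n := by
          apply Real.log_le_log (by positivity)
          exact h2
        rw [Real.log_pow] at h3
        push_cast at h3 ⊢
        linarith
      linarith
    have hΔR : ((Δ:ℕ):ℝ) = (n:ℝ)^T * (q:ℝ)^(b*T) := by
      rw [hΔdef]
      push_cast
      ring
    have hQpos : (0:ℝ) < (q:ℝ)^(b*T) := pow_pos hqR _
    have hNT : (0:ℝ) < (n:ℝ)^T := pow_pos hn0R _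
    have hD1 : (0:ℝ) < 8 * Real.exp 1 * (q:ℝ)^(b*T) * (n:ℝ)^T :=
      mul_pos (mul_pos (mul_pos (by norm_num) (Real.exp_pos 1)) hQpos) hNT
    have hD2 : (0:ℝ) < 4 * Real.exp 1 * ((n:ℝ)^T * (q:ℝ)^(b*T)) :=
      mul_pos (mul_pos (by norm_num) (Real.exp_pos 1)) (mul_pos hNT hQpos)
    have hstep : (8 * Real.exp 1 * (q:ℝ) ^ (b * T))⁻¹ * (q:ℝ) ^ n * Real.log n / (n:ℝ) ^ T
        ≤ ((q ^ n : ℕ) : ℝ) * Real.log m / (4 * Real.exp 1 * (Δ:ℝ)) := by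
      rw [hΔR]
      push_cast
      have hnum : (8 * Real.exp 1 * (q:ℝ) ^ (b * T))⁻¹ * (q:ℝ) ^ n * Real.log n / (n:ℝ) ^ T
          = ((q:ℝ) ^ n * (Real.log n / 2)) / (4 * Real.exp 1 * ((n:ℝ)^T * (q:ℝ)^(b*T))) := by
        rw [inv_mul_eq_div, div_mul_eq_mul_div, div_div,
          div_eq_div_iff hD1.ne' hD2.ne']
        ring
      rw [hnum]
      gcongr
    exact le_trans hstep hscard
end

section
/- Johnson-type upper bound for bursts: for positive integers w ≥ r, b, q ≥ 2 and any code S ⊆ Σ_q^n that has minimum cyclic burst distance at least 2r+1 and is contained in the burst ball Ball_{w,b}(0), we have |S| ≤ (w+1)(q^b−1)^{w−r} n^{w−r}. -/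
open scoped BigOperators

section Aux
variable {G : Type*} [AddCommGroup G] {n b : ℕ}

lemma aux_isBurst_neg {e : ZMod n → G} (h : IsBurst b e) : IsBurst b (-e) := by
  obtain ⟨i, L, hL, hs⟩ := h
  exact ⟨i, L, hL, fun j hj => hs j (by simpa using hj)⟩

lemma aux_sum_toList {α β : Type*} [AddCommMonoid β] (s : Finset α) (f : α → β) :
    (s.toList.map f).sum = s.sum f := by
  rw [← Multiset.sum_coe, ← Multiset.map_coe, Finset.coe_toList]
  rfl

lemma aux_sum_map_neg (l : List (ZMod n → G)) : (l.map (fun e => -e)).sum = -l.sum := by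
  induction l with
  | nil => simp
  | cons a l ih => simp [ih]; abel

lemma aux_sumOfBursts_exists [NeZero n] (hb : 1 ≤ b) (x : ZMod n → G) :
    ∃ t, SumOfBursts b t x := by
  classical
  refine ⟨(Finset.univ : Finset (ZMod n)).toList.length,
    (Finset.univ : Finset (ZMod n)).toList.map (fun j => Pi.single j (x j)), by simp, ?_, ?_⟩
  · intro e he
    simp only [List.mem_map] at he
    obtain ⟨j, _, rfl⟩ := he
    refine ⟨j, 1, hb, fun j' hj' => ⟨0, Nat.zero_lt_one, ?_⟩⟩
    by_contra hne
    exact hj' (Pi.single_eq_of_ne (by simpa using hne) _)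
  · rw [aux_sum_toList]
    exact Finset.univ_sum_single x

lemma aux_burstDist_le {x y : ZMod n → G} {t : ℕ} (h : SumOfBursts b t (x - y)) :
    burstDist b x y ≤ t := Nat.sInf_le h

lemma aux_min_decomp [NeZero n] (hb : 1 ≤ b) (x y : ZMod n → G) :
    ∃ l : List (ZMod n → G), l.length = burstDist b x y ∧
      (∀ e ∈ l, IsBurst b e ∧ e ≠ 0) ∧ l.sum = x - y := by
  have hne : {t | SumOfBursts b t (x - y)}.Nonempty := by
    obtain ⟨t, ht⟩ := aux_sumOfBursts_exists hb (x - y)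
    exact ⟨t, ht⟩
  obtain ⟨l, hlen, hB, hsum⟩ := Nat.sInf_mem hne
  refine ⟨l, hlen, fun e he => ⟨hB e he, ?_⟩, hsum⟩
  rintro rfl
  obtain ⟨s, t2, rfl⟩ := List.mem_iff_append.mp he
  have h2 : SumOfBursts b (s ++ t2).length (x - y) := by
    refine ⟨s ++ t2, rfl, fun e' he' => hB e' ?_, ?_⟩
    · simp only [List.mem_append, List.mem_cons] at he' ⊢; tauto
    · simpa using hsum
  have h3 := aux_burstDist_le h2
  simp only [List.length_append, List.length_cons] at hlen h3
  have e1 : burstDist b x y = sInf {t | SumOfBursts b t (x - y)} := rfl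
  omega

end Aux

noncomputable def decB (n b : ℕ) (G : Type*) [AddCommGroup G] (p : ZMod n × (Fin b → G)) :
    ZMod n → G :=
  fun j => if h : ∃ k : Fin b, j = p.1 + ((k : ℕ) : ZMod n) then p.2 h.choose else 0

lemma aux_dec_surj {G : Type*} [AddCommGroup G] {n b : ℕ} {e : ZMod n → G}
    (h : IsBurst b e) : ∃ p, decB n b G p = e := by
  classical
  obtain ⟨i, L, hLb, hs⟩ := h
  refine ⟨(i, fun k => e (i + ((k : ℕ) : ZMod n))), funext fun j => ?_⟩
  by_cases hj : ∃ k : Fin b, j = i + ((k : ℕ) : ZMod n)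
  · rw [decB]
    simp only [dif_pos hj]
    rw [← hj.choose_spec]
  · rw [decB]
    simp only [dif_neg hj]
    by_contra hne
    obtain ⟨k, hk, rfl⟩ := hs j (fun h0 => hne h0.symm)
    exact hj ⟨⟨k, lt_of_lt_of_le hk hLb⟩, rfl⟩

lemma aux_dec_ne_zero {G : Type*} [AddCommGroup G] {n b : ℕ} {e : ZMod n → G}
    {p : ZMod n × (Fin b → G)} (hp : decB n b G p = e) (he : e ≠ 0) : p.2 ≠ 0 := by
  rintro h0
  apply he
  rw [← hp]
  funext j
  rw [decB]
  split
  · rw [h0]; rfl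
  · rfl

noncomputable def encB (n b : ℕ) (G : Type*) [AddCommGroup G] (e : ZMod n → G) :
    ZMod n × (Fin b → G) :=
  letI := Classical.propDecidable (∃ p, decB n b G p = e)
  if h : ∃ p, decB n b G p = e then h.choose else (0, 0)

lemma aux_enc_dec {G : Type*} [AddCommGroup G] {n b : ℕ} {e : ZMod n → G}
    (h : IsBurst b e) : decB n b G (encB n b G e) = e := by
  rw [encB, dif_pos (aux_dec_surj h)]
  exact (aux_dec_surj h).choose_spec


/-- Johnson-type upper bound: any code S contained in Ball_{w,b}(0) with
minimum cyclic burst distance at least 2r+1 satisfies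
|S| ≤ (w+1)(q^b−1)^{w−r} n^{w−r}. -/
theorem johnson_upper_bound_bursts {G : Type*} [AddCommGroup G] [Fintype G]
    (n w r b q : ℕ) (hn : 1 ≤ n) (hw : r ≤ w) (hr : 1 ≤ r) (hb : 1 ≤ b)
    (hq : Fintype.card G = q) (hq2 : 2 ≤ q)
    (S : Set (ZMod n → G)) (hS : S ⊆ burstBall b w (0 : ZMod n → G))
    (hd : ∀ x ∈ S, ∀ y ∈ S, x ≠ y → 2 * r + 1 ≤ burstDist b x y) :
    S.ncard ≤ (w + 1) * (q ^ b - 1) ^ (w - r) * n ^ (w - r) := by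
  classical
  haveI : NeZero n := ⟨by omega⟩
  set m := w - r with hm
  -- a nonzero element of G
  haveI : Nontrivial G := Fintype.one_lt_card_iff_nontrivial.mp (by omega)
  obtain ⟨x0, hx0⟩ := exists_ne (0 : G)
  have hg0 : (fun _ : Fin b => x0) ≠ 0 := by
    intro h
    exact hx0 (congrFun h ⟨0, by omega⟩)
  -- target alphabet
  set A := ZMod n × {g : Fin b → G // g ≠ 0} with hA
  -- encoder of single bursts
  let encA : (ZMod n → G) → A := fun e =>
    ((encB n b G e).1,
      if h2 : (encB n b G e).2 ≠ 0 then ⟨(encB n b G e).2, h2⟩ else ⟨fun _ => x0, hg0⟩)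
  have hencA : ∀ e : ZMod n → G, IsBurst b e → e ≠ 0 →
      ∀ e' : ZMod n → G, IsBurst b e' → e' ≠ 0 → encA e = encA e' → e = e' := by
    intro e he hne e' he' hne' heq
    have hde := aux_enc_dec (n := n) (b := b) (G := G) he
    have hde' := aux_enc_dec (n := n) (b := b) (G := G) he'
    have h2 : (encB n b G e).2 ≠ 0 := aux_dec_ne_zero hde hne
    have h2' : (encB n b G e').2 ≠ 0 := aux_dec_ne_zero hde' hne'
    have hp : encB n b G e = encB n b G e' := by
      simp only [encA, dif_pos h2, dif_pos h2'] at heq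
      have hfst := congrArg Prod.fst heq
      have hsnd := congrArg (fun p => (Prod.snd p : {g : Fin b → G // g ≠ 0}).val) heq
      simp only at hfst hsnd
      exact Prod.ext hfst hsnd
    rw [← hde, ← hde', hp]
  -- decompositions of codewords
  have hdec : ∀ x ∈ S, ∃ l : List (ZMod n → G),
      l.length ≤ w ∧ (∀ e ∈ l, IsBurst b e ∧ e ≠ 0) ∧ l.sum = x := by
    intro x hx
    obtain ⟨l, h1, h2, h3⟩ := aux_min_decomp (n := n) hb (0 : ZMod n → G) x
    refine ⟨l.map (fun e => -e), ?_, ?_, ?_⟩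
    · simp only [List.length_map]
      calc l.length = burstDist b 0 x := h1
        _ ≤ w := hS hx
    · intro e he
      simp only [List.mem_map] at he
      obtain ⟨e', he', rfl⟩ := he
      exact ⟨aux_isBurst_neg (h2 e' he').1, by simpa using (h2 e' he').2⟩
    · rw [aux_sum_map_neg, h3]
      simp
  choose Lst hL1 hL2 hL3 using hdec
  -- the injective encoding
  have hinj : ∃ E : ↥S → (Σ t : Fin (m + 1), Fin (t : ℕ) → A), Function.Injective E := by
    refine ⟨fun x => ⟨⟨((Lst x.1 x.2).drop r).length, ?_⟩,
      fun k => encA (((Lst x.1 x.2).drop r).get k)⟩, ?_⟩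
    · have := hL1 x.1 x.2
      simp only [List.length_drop]
      omega
    · intro x y hxy
      obtain ⟨h1, h2⟩ := Sigma.mk.inj_iff.mp hxy
      rw [Fin.mk.injEq] at h1
      have hll : (Lst x.1 x.2).drop r = (Lst y.1 y.2).drop r := by
        apply List.ext_get h1
        intro k hk1 hk2
        have h3 := (Fin.heq_fun_iff h1).mp h2 ⟨k, hk1⟩
        have hmx : ((Lst x.1 x.2).drop r).get ⟨k, hk1⟩ ∈ Lst x.1 x.2 :=
          List.mem_of_mem_drop (List.get_mem _ _)
        have hmy : ((Lst y.1 y.2).drop r).get ⟨k, hk2⟩ ∈ Lst y.1 y.2 :=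
          List.mem_of_mem_drop (List.get_mem _ _)
        exact hencA _ (hL2 x.1 x.2 _ hmx).1 (hL2 x.1 x.2 _ hmx).2 _
          (hL2 y.1 y.2 _ hmy).1 (hL2 y.1 y.2 _ hmy).2 h3
      -- now show x = y
      by_contra hne
      have hxyne : x.1 ≠ y.1 := fun h => hne (Subtype.ext h)
      have hxsum : ((Lst x.1 x.2).take r).sum + ((Lst x.1 x.2).drop r).sum = x.1 := by
        rw [← List.sum_append, List.take_append_drop]
        exact hL3 x.1 x.2
      have hysum : ((Lst y.1 y.2).take r).sum + ((Lst y.1 y.2).drop r).sum = y.1 := by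
        rw [← List.sum_append, List.take_append_drop]
        exact hL3 y.1 y.2
      set cc : List (ZMod n → G) :=
        (Lst x.1 x.2).take r ++ ((Lst y.1 y.2).take r).map (fun e => -e) with hcc
      have hsb : SumOfBursts b cc.length (x.1 - y.1) := by
        refine ⟨cc, rfl, ?_, ?_⟩
        · intro e he
          rw [hcc, List.mem_append] at he
          rcases he with he | he
          · exact (hL2 x.1 x.2 e (List.mem_of_mem_take he)).1
          · simp only [List.mem_map] at he
            obtain ⟨e', he', rfl⟩ := he
            exact aux_isBurst_neg (hL2 y.1 y.2 e' (List.mem_of_mem_take he')).1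
        · rw [hcc, List.sum_append, aux_sum_map_neg]
          have hds : ((Lst x.1 x.2).drop r).sum = ((Lst y.1 y.2).drop r).sum :=
            congrArg List.sum hll
          calc ((Lst x.1 x.2).take r).sum + -((Lst y.1 y.2).take r).sum
              = (((Lst x.1 x.2).take r).sum + ((Lst x.1 x.2).drop r).sum)
                - (((Lst y.1 y.2).take r).sum + ((Lst y.1 y.2).drop r).sum) := by
                rw [hds]; abel
            _ = x.1 - y.1 := by rw [hxsum, hysum]
      have hlcc : cc.length ≤ 2 * r := by
        simp only [hcc, List.length_append, List.length_map, List.length_take]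
        omega
      have := le_trans (aux_burstDist_le hsb) hlcc
      have := hd x.1 x.2 y.1 y.2 hxyne
      omega
  obtain ⟨E, hE⟩ := hinj
  -- cardinality computation
  have hcard2 : Fintype.card {g : Fin b → G // g ≠ 0} = q ^ b - 1 := by
    have h1 := Fintype.card_subtype_compl (fun g : Fin b → G => g = 0)
    have h2 : Fintype.card {g : Fin b → G // g = 0} = 1 := Fintype.card_subtype_eq _
    have h3 : Fintype.card (Fin b → G) = q ^ b := by
      rw [Fintype.card_fun, hq, Fintype.card_fin]
    simp only [h2, h3] at h1
    convert h1 using 2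
  have hcardA : Fintype.card A = n * (q ^ b - 1) := by
    show Fintype.card (ZMod n × {g : Fin b → G // g ≠ 0}) = n * (q ^ b - 1)
    rw [Fintype.card_prod, ZMod.card, hcard2]
  have hqb : 2 ≤ q ^ b := le_trans hq2 (Nat.le_self_pow (by omega) q)
  have hA1 : 1 ≤ Fintype.card A := by
    rw [hcardA]
    have : 1 ≤ q ^ b - 1 := by omega
    calc 1 = 1 * 1 := by ring
      _ ≤ n * (q ^ b - 1) := Nat.mul_le_mul hn this
  calc S.ncard = Nat.card ↥S := (Nat.card_coe_set_eq S).symm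
    _ ≤ Nat.card (Σ t : Fin (m + 1), Fin (t : ℕ) → A) :=
        Nat.card_le_card_of_injective E hE
    _ = ∑ t : Fin (m + 1), (Fintype.card A) ^ (t : ℕ) := by
        rw [Nat.card_eq_fintype_card, Fintype.card_sigma]
        congr 1
        funext t
        rw [Fintype.card_fun, Fintype.card_fin]
    _ ≤ ∑ _t : Fin (m + 1), (Fintype.card A) ^ m := by
        apply Finset.sum_le_sum
        intro t _
        exact Nat.pow_le_pow_right hA1 (by omega)
    _ = (m + 1) * (Fintype.card A) ^ m := by
        rw [Finset.sum_const, Finset.card_univ, Fintype.card_fin, smul_eq_mul]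
    _ ≤ (w + 1) * (q ^ b - 1) ^ m * n ^ m := by
        rw [hcardA, Nat.mul_pow]
        calc (m + 1) * ((n ^ m) * (q ^ b - 1) ^ m)
            = (m + 1) * (q ^ b - 1) ^ m * n ^ m := by ring
          _ ≤ (w + 1) * (q ^ b - 1) ^ m * n ^ m := by
              gcongr
              omega
end

section
/- For fixed w ≥ r ≥ 1 and b ≥ 1, there exists a sequence of codes C_n ⊆ Σ_q^n, each contained in the burst ball Ball_{w,b}(0) and with minimum cyclic burst distance at least 2r+1, such that |C_n| = Ω(n^{w−r}). -/
open scoped BigOperators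

section Helpers

lemma list_sum_apply' {α G : Type*} [AddCommMonoid G] (l : List (α → G)) (j : α) :
    l.sum j = (l.map (fun e => e j)).sum := by
  induction l with
  | nil => rfl
  | cons e l ih => simp [List.sum_cons, ih]

lemma sumOfBursts_of_support {G : Type*} [AddCommGroup G] {n b : ℕ} (hb : 1 ≤ b)
    (v : ZMod n → G) (S : Finset (ZMod n)) (hS : ∀ j, v j ≠ 0 → j ∈ S) :
    SumOfBursts b S.card v := by
  classical
  refine ⟨S.toList.map (fun j k => if k = j then v j else 0), by simp, ?_, ?_⟩
  · intro e he
    simp only [List.mem_map] at he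
    obtain ⟨j, -, rfl⟩ := he
    refine ⟨j, 1, hb, ?_⟩
    intro j' hj'
    have hj : j' = j := by by_contra h; simp [h] at hj'
    exact ⟨0, one_pos, by simp [hj]⟩
  · funext t
    rw [list_sum_apply', List.map_map]
    have : ((fun e => e t) ∘ fun j k => if k = j then v j else 0)
        = fun j => if t = j then v j else 0 := rfl
    rw [this, Finset.sum_map_toList, Finset.sum_ite_eq]
    by_cases h : t ∈ S
    · simp [h]
    · simp only [h, if_false]
      by_contra h'
      exact h (hS t (fun hv => h' hv.symm))

lemma card_le_of_sumOfBursts {G : Type*} [AddCommGroup G] {n b t : ℕ}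
    {v : ZMod n → G} (h : SumOfBursts b t v) (S : Finset (ZMod n))
    (hS : ∀ j ∈ S, v j ≠ 0)
    (sep : ∀ (j j' : ZMod n) (i : ZMod n) (L : ℕ), v j ≠ 0 → v j' ≠ 0 → L ≤ b →
      j ∈ cycInt n i L → j' ∈ cycInt n i L → j = j') :
    S.card ≤ t := by
  classical
  obtain ⟨l, hlen, hburst, hsum⟩ := h
  rcases Nat.eq_zero_or_pos l.length with h0 | h0
  · have hle : l = [] := List.length_eq_zero_iff.mp h0
    subst hle
    have hv : v = 0 := by rw [← hsum]; rfl
    have hSe : S = ∅ := by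
      by_contra hne
      obtain ⟨j, hj⟩ := Finset.nonempty_iff_ne_empty.mpr hne
      exact hS j hj (by rw [hv]; rfl)
    simp [hSe]
  · have key : ∀ j : ZMod n, ∃ m : Fin l.length, j ∈ S → l.get m j ≠ 0 := by
      intro j
      by_cases hj : j ∈ S
      · by_contra hc
        push_neg at hc
        have hv : v j = 0 := by
          rw [← hsum, list_sum_apply']
          apply List.sum_eq_zero
          intro x hx
          simp only [List.mem_map] at hx
          obtain ⟨e, he, rfl⟩ := hx
          obtain ⟨m, hm⟩ := List.mem_iff_get.mp he
          rw [← hm]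
          exact (hc m).2
        exact hS j hj hv
      · exact ⟨⟨0, h0⟩, fun hmem => absurd hmem hj⟩
    choose φ hφ using key
    have hbd : ∀ m : Fin l.length, ∃ i L, BurstAt b (l.get m) i L :=
      fun m => hburst _ (by rw [show m = ⟨m.1, m.2⟩ from rfl]; exact l.get_mem _)
    choose P L hPL using hbd
    calc S.card ≤ (Finset.univ : Finset (Fin l.length)).card := by
          apply Finset.card_le_card_of_injOn φ (fun _ _ => Finset.mem_univ _)
          intro j hj j' hj' hmeq
          simp only [Finset.mem_coe] at hj hj'
          have h1 := hφ j hj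
          have h2 := hφ j' hj'
          rw [hmeq] at h1
          have hv1 : v j ≠ 0 := hS j hj
          have hv2 : v j' ≠ 0 := hS j' hj'
          exact sep j j' (P (φ j')) (L (φ j')) hv1 hv2 (hPL (φ j')).1
            ((hPL (φ j')).2 j h1) ((hPL (φ j')).2 j' h2)
      _ = t := by simp [hlen]

lemma sep_points {n b K : ℕ} (hK : b * K ≤ n) {m m' : ℕ}
    (hm : m < K) (hm' : m' < K) {i : ZMod n} {L : ℕ} (hL : L ≤ b)
    (h1 : ((b * m : ℕ) : ZMod n) ∈ cycInt n i L)
    (h2 : ((b * m' : ℕ) : ZMod n) ∈ cycInt n i L) : m = m' := by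
  obtain ⟨k, hk, hjk⟩ := h1
  obtain ⟨k', hk', hjk'⟩ := h2
  have e : ((b * m + k' : ℕ) : ZMod n) = ((b * m' + k : ℕ) : ZMod n) := by
    rw [Nat.cast_add, Nat.cast_add, hjk, hjk']; ring
  have hb1 : b * (m + 1) ≤ b * K := Nat.mul_le_mul_left b hm
  have hb2 : b * (m' + 1) ≤ b * K := Nat.mul_le_mul_left b hm'
  have h1' : b * m + k' < n := by
    have : b * m + k' < b * (m + 1) := by rw [Nat.mul_succ]; omega
    omega
  have h2' : b * m' + k < n := by
    have : b * m' + k < b * (m' + 1) := by rw [Nat.mul_succ]; omega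
    omega
  have heq : b * m + k' = b * m' + k := by
    have hv := congrArg ZMod.val e
    rwa [ZMod.val_cast_of_lt h1', ZMod.val_cast_of_lt h2'] at hv
  rcases lt_trichotomy m m' with h | h | h
  · exfalso
    have := Nat.mul_le_mul_left b (show m + 1 ≤ m' by omega)
    rw [Nat.mul_succ] at this
    omega
  · exact h
  · exfalso
    have := Nat.mul_le_mul_left b (show m' + 1 ≤ m by omega)
    rw [Nat.mul_succ] at this
    omega

noncomputable def polEval (p k : ℕ) (a : Fin k → ZMod p) (x : ZMod p) : ZMod p :=
  ∑ j : Fin k, a j * x ^ (j : ℕ)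

lemma agree_count {p k w : ℕ} [Fact p.Prime] (hw : w ≤ p) {a a' : Fin k → ZMod p}
    (hne : a ≠ a') :
    (Finset.univ.filter fun i : Fin w =>
      polEval p k a (((i : ℕ) : ZMod p)) = polEval p k a' (((i : ℕ) : ZMod p))).card
      ≤ k - 1 := by
  classical
  obtain ⟨j₀, hj₀⟩ := Function.ne_iff.mp hne
  have hk1 : 1 ≤ k := by have := j₀.2; omega
  set q : Polynomial (ZMod p) :=
    ∑ j : Fin k, Polynomial.monomial (j : ℕ) (a j - a' j) with hq
  have hq0 : q ≠ 0 := by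
    intro h
    have hc : q.coeff (j₀ : ℕ) = 0 := by rw [h]; simp
    rw [hq, Polynomial.finset_sum_coeff] at hc
    rw [Finset.sum_eq_single j₀ (fun j _ hj => by
      rw [Polynomial.coeff_monomial, if_neg (fun hv => hj (Fin.ext hv))])
      (fun h => absurd (Finset.mem_univ j₀) h)] at hc
    rw [Polynomial.coeff_monomial, if_pos rfl] at hc
    exact hj₀ (sub_eq_zero.mp hc)
  have hdeg : q.natDegree ≤ k - 1 :=
    Polynomial.natDegree_sum_le_of_forall_le _ _ (fun j _ =>
      le_trans (Polynomial.natDegree_monomial_le _) (by omega))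
  calc (Finset.univ.filter fun i : Fin w =>
      polEval p k a (((i : ℕ) : ZMod p)) = polEval p k a' (((i : ℕ) : ZMod p))).card
      ≤ q.roots.toFinset.card := by
        refine Finset.card_le_card_of_injOn (fun i => ((i : ℕ) : ZMod p)) ?_ ?_
        · intro i hi
          simp only [Finset.mem_coe, Finset.mem_filter] at hi ⊢
          rw [Multiset.mem_toFinset, Polynomial.mem_roots hq0]
          show Polynomial.eval _ q = 0
          rw [hq, Polynomial.eval_finset_sum]
          simp only [Polynomial.eval_monomial, sub_mul]
          rw [Finset.sum_sub_distrib]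
          have h2 := hi.2
          simp only [polEval] at h2
          rw [h2, sub_self]
        · intro i _ i' _ hii
          have hv := congrArg ZMod.val hii
          rw [ZMod.val_cast_of_lt (lt_of_lt_of_le i.2 hw),
            ZMod.val_cast_of_lt (lt_of_lt_of_le i'.2 hw)] at hv
          exact Fin.ext hv
    _ ≤ Multiset.card q.roots := Multiset.toFinset_card_le _
    _ ≤ q.natDegree := Polynomial.card_roots' q
    _ ≤ k - 1 := hdeg

noncomputable def posOf (b p w k : ℕ) (a : Fin k → ZMod p) [NeZero p] (i : Fin w) : ℕ :=
  b * ((i : ℕ) * p + (polEval p k a ((i : ℕ) : ZMod p)).val)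

open Classical in
noncomputable def codeword {G : Type*} [AddCommGroup G] (g : G) (n b p w k : ℕ)
    [NeZero p] (a : Fin k → ZMod p) : ZMod n → G :=
  fun t => if ∃ i : Fin w, t = ((posOf b p w k a i : ℕ) : ZMod n) then g else 0

lemma main_aux {G : Type*} [AddCommGroup G] (g : G) (hg : g ≠ 0) (w r b n p : ℕ)
    (hb : 1 ≤ b) (hr : 1 ≤ r) (hw : r ≤ w) (hwp : w ≤ p) (hp : p.Prime)
    (hn : b * (w * p) ≤ n) :
    ∃ C : Set (ZMod n → G),
      C ⊆ burstBall b w 0 ∧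
      (∀ x ∈ C, ∀ y ∈ C, x ≠ y → 2 * r + 1 ≤ burstDist b x y) ∧
      C.ncard = p ^ (w - r) := by
  classical
  haveI : Fact p.Prime := ⟨hp⟩
  have hp0 : 0 < p := hp.pos
  have hw0 : 0 < w := by omega
  have hn0 : 0 < n := lt_of_lt_of_le (Nat.mul_pos (by omega) (Nat.mul_pos hw0 hp0)) hn
  haveI : NeZero n := ⟨hn0.ne'⟩
  set k := w - r with hk
  set F : (Fin k → ZMod p) → ZMod n → G := codeword g n b p w k with hF
  -- basic facts about positions
  have hmlt : ∀ (a : Fin k → ZMod p) (i : Fin w),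
      (i : ℕ) * p + (polEval p k a ((i : ℕ) : ZMod p)).val < w * p := by
    intro a i
    have h1 : (polEval p k a ((i : ℕ) : ZMod p)).val < p := ZMod.val_lt _
    have h2 : (i : ℕ) + 1 ≤ w := i.2
    calc (i : ℕ) * p + (polEval p k a ((i : ℕ) : ZMod p)).val
        < ((i : ℕ) + 1) * p := by rw [add_mul, one_mul]; omega
      _ ≤ w * p := Nat.mul_le_mul_right p h2
  have hposlt : ∀ (a : Fin k → ZMod p) (i : Fin w), posOf b p w k a i < n := by
    intro a i
    calc posOf b p w k a i < b * (w * p) :=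
          mul_lt_mul_of_pos_left (hmlt a i) (by omega)
      _ ≤ n := hn
  have hcastinj : ∀ (a a' : Fin k → ZMod p) (i i' : Fin w),
      ((posOf b p w k a i : ℕ) : ZMod n) = ((posOf b p w k a' i' : ℕ) : ZMod n) →
      i = i' ∧ polEval p k a ((i : ℕ) : ZMod p) = polEval p k a' ((i' : ℕ) : ZMod p) := by
    intro a a' i i' hcast
    have hval := congrArg ZMod.val hcast
    rw [ZMod.val_cast_of_lt (hposlt a i), ZMod.val_cast_of_lt (hposlt a' i')] at hval
    have heq : (i : ℕ) * p + (polEval p k a ((i : ℕ) : ZMod p)).val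
        = (i' : ℕ) * p + (polEval p k a' ((i' : ℕ) : ZMod p)).val :=
      Nat.eq_of_mul_eq_mul_left hb hval
    have hv1 : (polEval p k a ((i : ℕ) : ZMod p)).val < p := ZMod.val_lt _
    have hv2 : (polEval p k a' ((i' : ℕ) : ZMod p)).val < p := ZMod.val_lt _
    have hii : (i : ℕ) = (i' : ℕ) := by
      rcases lt_trichotomy (i : ℕ) (i' : ℕ) with h | h | h
      · exfalso
        have := Nat.mul_le_mul_right p (show (i : ℕ) + 1 ≤ (i' : ℕ) by omega)
        rw [add_mul, one_mul] at this
        omega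
      · exact h
      · exfalso
        have := Nat.mul_le_mul_right p (show (i' : ℕ) + 1 ≤ (i : ℕ) by omega)
        rw [add_mul, one_mul] at this
        omega
    have hieq : i = i' := Fin.ext hii
    subst hieq
    refine ⟨rfl, ZMod.val_injective p ?_⟩
    omega
  -- the support finsets
  set A : (Fin k → ZMod p) → Finset (ZMod n) :=
    fun a => Finset.univ.image (fun i : Fin w => ((posOf b p w k a i : ℕ) : ZMod n))
    with hA
  have hmemA : ∀ a t, t ∈ A a ↔ ∃ i : Fin w, t = ((posOf b p w k a i : ℕ) : ZMod n) := by
    intro a t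
    simp only [hA, Finset.mem_image, Finset.mem_univ, true_and]
    constructor
    · rintro ⟨i, hi⟩; exact ⟨i, hi.symm⟩
    · rintro ⟨i, hi⟩; exact ⟨i, hi.symm⟩
  have hFval : ∀ a t, (t ∈ A a → F a t = g) ∧ (t ∉ A a → F a t = 0) := by
    intro a t
    constructor
    · intro ht
      rw [hF]
      unfold codeword
      rw [if_pos ((hmemA a t).mp ht)]
    · intro ht
      rw [hF]
      unfold codeword
      rw [if_neg (fun h => ht ((hmemA a t).mpr h))]
  have hcardA : ∀ a, (A a).card = w := by
    intro a
    rw [hA]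
    rw [Finset.card_image_of_injective _ (fun i i' h => (hcastinj a a i i' h).1)]
    simp
  -- distance lower bound for distinct parameters
  have hdist : ∀ a a' : Fin k → ZMod p, a ≠ a' → 2 * r + 1 ≤ burstDist b (F a) (F a') := by
    intro a a' hne
    have hk1 : 1 ≤ k := by
      rcases Nat.eq_zero_or_pos k with h0 | h0
      · exfalso; apply hne; funext j
        exact absurd j.2 (by omega)
      · exact h0
    set v : ZMod n → G := F a - F a' with hv
    set Sv : Finset (ZMod n) := Finset.univ.filter (fun t => v t ≠ 0) with hSv
    have hSvmem : ∀ t, t ∈ Sv ↔ v t ≠ 0 := by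
      intro t; simp [hSv]
    -- support of v is contained in A a ∪ A a', all points of the form b*m
    have hform : ∀ t, v t ≠ 0 → ∃ m : ℕ, m < w * p ∧ t = ((b * m : ℕ) : ZMod n) := by
      intro t ht
      have : t ∈ A a ∪ A a' := by
        by_contra hc
        simp only [Finset.mem_union, not_or] at hc
        have e1 := (hFval a t).2 hc.1
        have e2 := (hFval a' t).2 hc.2
        apply ht
        rw [hv]
        show F a t - F a' t = 0
        rw [e1, e2, sub_zero]
      rw [Finset.mem_union, hmemA, hmemA] at this
      rcases this with ⟨i, hi⟩ | ⟨i, hi⟩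
      · exact ⟨_, hmlt a i, hi⟩
      · exact ⟨_, hmlt a' i, hi⟩
    have hsep : ∀ (j j' : ZMod n) (i : ZMod n) (L : ℕ), v j ≠ 0 → v j' ≠ 0 → L ≤ b →
        j ∈ cycInt n i L → j' ∈ cycInt n i L → j = j' := by
      intro j j' i L h1 h2 hL hj hj'
      obtain ⟨m, hm, rfl⟩ := hform j h1
      obtain ⟨m', hm', rfl⟩ := hform j' h2
      rw [sep_points hn hm hm' hL hj hj']
    -- symmetric difference count
    have hsub : (A a \ A a') ∪ (A a' \ A a) ⊆ Sv := by
      intro t ht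
      rw [Finset.mem_union] at ht
      rw [hSvmem]
      rcases ht with ht | ht
      · rw [Finset.mem_sdiff] at ht
        have e1 := (hFval a t).1 ht.1
        have e2 := (hFval a' t).2 ht.2
        show F a t - F a' t ≠ 0
        rw [e1, e2, sub_zero]; exact hg
      · rw [Finset.mem_sdiff] at ht
        have e1 := (hFval a' t).1 ht.1
        have e2 := (hFval a t).2 ht.2
        show F a t - F a' t ≠ 0
        rw [e1, e2, zero_sub]
        exact neg_ne_zero.mpr hg
    -- intersection bound
    have hcap : ∀ (x y : Fin k → ZMod p), x ≠ y → (A x ∩ A y).card ≤ k - 1 := by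
      intro x y hxy
      set R : Finset (Fin w) := Finset.univ.filter (fun i : Fin w =>
        polEval p k x (((i : ℕ) : ZMod p)) = polEval p k y (((i : ℕ) : ZMod p))) with hR
      have hwpos : 0 < w := lt_of_lt_of_le hr hw
      set f : ZMod n → Fin w := fun t =>
        if h : ∃ i : Fin w, t = ((posOf b p w k x i : ℕ) : ZMod n) then h.choose
        else ⟨0, hwpos⟩ with hf
      have : (A x ∩ A y).card ≤ R.card := by
        refine Finset.card_le_card_of_injOn f ?_ ?_
        · intro t ht
          rw [Finset.mem_coe, Finset.mem_inter, hmemA, hmemA] at ht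
          obtain ⟨h1, h2⟩ := ht
          rw [hf]
          simp only
          rw [dif_pos h1]
          obtain ⟨i', hi'⟩ := h2
          have hch := h1.choose_spec
          rw [hR, Finset.mem_coe, Finset.mem_filter]
          refine ⟨Finset.mem_univ _, ?_⟩
          obtain ⟨hie, hpe⟩ := hcastinj x y h1.choose i' (by rw [← hch, ← hi'])
          rw [hie] at hpe ⊢
          exact hpe
        · intro t ht t' ht' hft
          rw [Finset.mem_coe, Finset.mem_inter, hmemA, hmemA] at ht ht'
          have h1 := ht.1
          have h1' := ht'.1
          rw [hf] at hft
          simp only at hft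
          rw [dif_pos h1, dif_pos h1'] at hft
          rw [h1.choose_spec, h1'.choose_spec, hft]
      calc (A x ∩ A y).card ≤ R.card := this
        _ ≤ k - 1 := agree_count hwp hxy
    -- count
    have hcount : 2 * r + 2 ≤ Sv.card := by
      have hdisj : Disjoint (A a \ A a') (A a' \ A a) :=
        disjoint_sdiff_sdiff
      have h1 : (A a \ A a').card + (A a ∩ A a').card = (A a).card :=
        Finset.card_sdiff_add_card_inter _ _
      have h2 : (A a' \ A a).card + (A a' ∩ A a).card = (A a').card :=
        Finset.card_sdiff_add_card_inter _ _
      have hc1 : (A a ∩ A a').card ≤ k - 1 := hcap a a' hne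
      have hc2 : (A a' ∩ A a).card ≤ k - 1 := hcap a' a (fun h => hne h.symm)
      have h3 : (A a \ A a').card + (A a' \ A a).card ≤ Sv.card := by
        rw [← Finset.card_union_of_disjoint hdisj]
        exact Finset.card_le_card hsub
      have hca := hcardA a
      have hca' := hcardA a'
      omega
    -- conclude
    show 2 * r + 1 ≤ sInf {t | SumOfBursts b t (F a - F a')}
    have hne' : {t | SumOfBursts b t (F a - F a')}.Nonempty :=
      ⟨Sv.card, sumOfBursts_of_support hb v Sv (fun j hj => (hSvmem j).mpr hj)⟩
    refine le_csInf hne' ?_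
    intro t ht
    have := card_le_of_sumOfBursts ht Sv (fun j hj => (hSvmem j).mp hj) hsep
    omega
  -- self distance is zero
  have hself : ∀ x : ZMod n → G, burstDist b x x = 0 := by
    intro x
    have : (0 : ℕ) ∈ {t | SumOfBursts b t (x - x)} :=
      ⟨[], rfl, by simp, by rw [sub_self]; rfl⟩
    exact Nat.le_zero.mp (Nat.sInf_le this)
  -- F is injective
  have hFinj : Function.Injective F := by
    intro a a' hFa
    by_contra hne
    have := hdist a a' hne
    rw [hFa, hself] at this
    omega
  refine ⟨Set.range F, ?_, ?_, ?_⟩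
  · rintro x ⟨a, rfl⟩
    show burstDist b 0 (F a) ≤ w
    have hsupp : ∀ t, (0 - F a) t ≠ 0 → t ∈ A a := by
      intro t ht
      by_contra hc
      apply ht
      show (0 : G) - F a t = 0
      rw [(hFval a t).2 hc, sub_zero]
    have hmem : SumOfBursts b (A a).card ((0 : ZMod n → G) - F a) :=
      sumOfBursts_of_support hb _ (A a) hsupp
    calc burstDist b 0 (F a) ≤ (A a).card := Nat.sInf_le hmem
      _ = w := hcardA a
  · rintro x ⟨a, rfl⟩ y ⟨a', rfl⟩ hxy
    exact hdist a a' (fun h => hxy (by rw [h]))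
  · rw [← Set.image_univ, Set.ncard_image_of_injective _ hFinj, Set.ncard_univ,
      Nat.card_eq_fintype_card, Fintype.card_fun, ZMod.card, Fintype.card_fin]

end Helpers

/-- Johnson-type lower bound: for fixed w ≥ r ≥ 1, b ≥ 1, there exist codes
C_n ⊆ Ball_{w,b}(0) with minimum cyclic burst distance at least 2r+1 and
|C_n| = Ω(n^{w−r}). -/
theorem johnson_lower_bound_bursts {G : Type*} [AddCommGroup G] [Fintype G]
    (q w r b : ℕ) (hq : Fintype.card G = q) (hq2 : 2 ≤ q) (hb : 1 ≤ b)
    (hr : 1 ≤ r) (hw : r ≤ w) :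
    ∃ c : ℝ, 0 < c ∧ ∃ n₀ : ℕ, ∀ n ≥ n₀, ∃ C : Set (ZMod n → G),
      C ⊆ burstBall b w (0 : ZMod n → G) ∧
      (∀ x ∈ C, ∀ y ∈ C, x ≠ y → 2 * r + 1 ≤ burstDist b x y) ∧
      c * (n : ℝ) ^ (w - r) ≤ (C.ncard : ℝ) := by
  classical
  obtain ⟨g, hg⟩ := Fintype.exists_ne_of_one_lt_card (by omega) (0 : G)
  have hw0 : 0 < w := by omega
  set D := 2 * w * b with hD
  have hD0 : 0 < D := Nat.mul_pos (Nat.mul_pos two_pos hw0) hb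
  have hDR : (0 : ℝ) < (D : ℝ) := by exact_mod_cast hD0
  refine ⟨1 / (D : ℝ) ^ (w - r), one_div_pos.mpr (pow_pos hDR _), D * (w + 2), ?_⟩
  intro n hn
  set N := n / D with hN
  have hND : w + 2 ≤ N := (Nat.le_div_iff_mul_le hD0).mpr (by rw [mul_comm]; exact hn)
  obtain ⟨p, hp, hNp, hp2N⟩ := Nat.exists_prime_lt_and_le_two_mul N (by omega)
  have hwp : w ≤ p := by omega
  have hbn : b * (w * p) ≤ n := by
    have h1 : D * N ≤ n := by rw [mul_comm]; exact Nat.div_mul_le_self n D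
    calc b * (w * p) ≤ b * (w * (2 * N)) :=
          Nat.mul_le_mul_left _ (Nat.mul_le_mul_left _ hp2N)
      _ = D * N := by ring
      _ ≤ n := h1
  obtain ⟨C, hC1, hC2, hC3⟩ := main_aux g hg w r b n p hb hr hw hwp hp hbn
  refine ⟨C, hC1, hC2, ?_⟩
  rw [hC3]
  have hnlt : n < D * (N + 1) := by
    have h := (Nat.div_lt_iff_lt_mul hD0).mp (show n / D < N + 1 by omega)
    rw [mul_comm] at h
    exact h
  have hnp : (n : ℝ) ≤ (D : ℝ) * (p : ℝ) := by
    calc (n : ℝ) ≤ ((D * (N + 1) : ℕ) : ℝ) := by exact_mod_cast hnlt.le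
      _ ≤ ((D * p : ℕ) : ℝ) := by
          exact_mod_cast Nat.mul_le_mul_left D (show N + 1 ≤ p from hNp)
      _ = (D : ℝ) * (p : ℝ) := by push_cast; ring
  have key : (n : ℝ) / (D : ℝ) ≤ (p : ℝ) := by
    rw [div_le_iff₀ hDR]; linarith
  calc 1 / (D : ℝ) ^ (w - r) * (n : ℝ) ^ (w - r)
      = ((n : ℝ) / (D : ℝ)) ^ (w - r) := by rw [div_pow]; ring
    _ ≤ (p : ℝ) ^ (w - r) := pow_le_pow_left₀ (by positivity) key _
    _ = ((p ^ (w - r) : ℕ) : ℝ) := by push_cast; ring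
end
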